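/- arXiv:2302.06177 — 8 statements merged into one kernel-verified Lean document; each statement's English description precedes it below -/
import Mathlib

section
/- A directed multigraph D with a special vertex s has k arc-disjoint out-branchings rooted at s if and only if every nonempty subset X of V(D) not containing s has in-degree at least k (i.e., at least k arcs enter X). -/
variable {V : Type*}

/-- A digraph (given by its arc relation `A`) is semicomplete if every pair of
distinct vertices is joined by an arc in at least one direction. -/
def Semicomplete (A : V → V → Prop) : Prop :=
  ∀ x y : V, x ≠ y → A x y ∨ A y x

/-- Reachability by a directed path. -/
def Reach (A : V → V → Prop) : V → V → Prop := Relation.ReflTransGen A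

/-- Reachability inside the induced subdigraph on `S`. -/
def ReachOn (A : V → V → Prop) (S : Set V) : V → V → Prop :=
  Relation.ReflTransGen (fun a b => a ∈ S ∧ b ∈ S ∧ A a b)

/-- A digraph is strong if every vertex reaches every other vertex. -/
def Strong (A : V → V → Prop) : Prop := ∀ x y : V, Reach A x y

/-- The induced subdigraph on `S` is strong. -/
def StrongOn (A : V → V → Prop) (S : Set V) : Prop :=
  ∀ a ∈ S, ∀ b ∈ S, ReachOn A S a b

/-- `Out(D)`: vertices which can reach every other vertex. -/
def OutSet (A : V → V → Prop) : Set V := {x | ∀ y, Reach A x y}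

/-- `In(D)`: vertices reachable from every other vertex. -/
def InSet (A : V → V → Prop) : Set V := {x | ∀ y, Reach A y x}

/-- Deletion of a single arc. -/
def Del (A : V → V → Prop) (e : V × V) : V → V → Prop :=
  fun a b => A a b ∧ (a, b) ≠ e

/-- The arcs of a path represented as a list of vertices. -/
def pathArcs (p : List V) : List (V × V) := p.zip p.tail

/-- `p` is a directed path from `x` to `y` in the digraph `A`. -/
def IsPathOn (A : V → V → Prop) (x y : V) (p : List V) : Prop :=
  p ≠ [] ∧ p.head? = some x ∧ p.getLast? = some y ∧ p.Nodup ∧ p.Chain' A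

/-- There are arc-disjoint `(x₁,y₁)`- and `(x₂,y₂)`-paths. -/
def ArcDisjointPaths (A : V → V → Prop) (x₁ y₁ x₂ y₂ : V) : Prop :=
  ∃ p q : List V, IsPathOn A x₁ y₁ p ∧ IsPathOn A x₂ y₂ q ∧
    ∀ e ∈ pathArcs p, e ∉ pathArcs q

/-- `B` is (the arc set of) an out-branching of `A` rooted at `u`. -/
def IsOutBranching (A : V → V → Prop) (u : V) (B : Set (V × V)) : Prop :=
  (∀ e ∈ B, A e.1 e.2) ∧ (∀ w, (w, u) ∉ B) ∧
  (∀ v : V, v ≠ u → ∃! w, (w, v) ∈ B) ∧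
  (∀ v : V, Relation.ReflTransGen (fun a b => (a, b) ∈ B) u v)

/-- `B` is (the arc set of) an in-branching of `A` rooted at `v`. -/
def IsInBranching (A : V → V → Prop) (v : V) (B : Set (V × V)) : Prop :=
  (∀ e ∈ B, A e.1 e.2) ∧ (∀ w, (v, w) ∉ B) ∧
  (∀ x : V, x ≠ v → ∃! w, (x, w) ∈ B) ∧
  (∀ x : V, Relation.ReflTransGen (fun a b => (a, b) ∈ B) x v)

/-- A good `(u,v)`-pair: an out-branching rooted at `u` arc-disjoint from an
in-branching rooted at `v`. -/
def GoodPair (A : V → V → Prop) (u v : V) : Prop :=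
  ∃ Bp Bm : Set (V × V), IsOutBranching A u Bp ∧ IsInBranching A v Bm ∧ Disjoint Bp Bm

/-- Out-branching in a directed multigraph given by arc type `E` with tail and
head maps. -/
def IsOutBranchingM {E : Type*} (tl hd : E → V) (s : V) (B : Set E) : Prop :=
  (∀ e ∈ B, hd e ≠ s) ∧
  (∀ v : V, v ≠ s → ∃! e, e ∈ B ∧ hd e = v) ∧
  (∀ v : V, Relation.ReflTransGen (fun a b => ∃ e ∈ B, tl e = a ∧ hd e = b) s v)

section EdmondsAuxSect

set_option linter.unusedSectionVars false
set_option linter.unusedVariables false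
set_option maxHeartbeats 1000000

namespace EdmondsAux

variable {V E : Type*} [Fintype V] [Fintype E]

noncomputable def dcut (tl hd : E → V) (Av : Set E) (X : Set V) : ℕ :=
  {e | e ∈ Av ∧ tl e ∉ X ∧ hd e ∈ X}.ncard

lemma dcut_submodular (tl hd : E → V) (Av : Set E) (X Y : Set V) :
    dcut tl hd Av (X ∪ Y) + dcut tl hd Av (X ∩ Y) ≤ dcut tl hd Av X + dcut tl hd Av Y := by
  set A1 : Set E := {e | e ∈ Av ∧ tl e ∉ X ∧ hd e ∈ X}
  set A2 : Set E := {e | e ∈ Av ∧ tl e ∉ Y ∧ hd e ∈ Y}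
  set B1 : Set E := {e | e ∈ Av ∧ tl e ∉ X ∪ Y ∧ hd e ∈ X ∪ Y}
  set B2 : Set E := {e | e ∈ Av ∧ tl e ∉ X ∩ Y ∧ hd e ∈ X ∩ Y}
  have hU : B1 ∪ B2 ⊆ A1 ∪ A2 := by
    rintro e (⟨he, ht, hh⟩ | ⟨he, ht, hh⟩)
    · rcases hh with hh | hh
      · exact Or.inl ⟨he, fun h => ht (Or.inl h), hh⟩
      · exact Or.inr ⟨he, fun h => ht (Or.inr h), hh⟩
    · by_cases hx : tl e ∈ X
      · exact Or.inr ⟨he, fun h => ht ⟨hx, h⟩, hh.2⟩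
      · exact Or.inl ⟨he, hx, hh.1⟩
  have hI : B1 ∩ B2 ⊆ A1 ∩ A2 := by
    rintro e ⟨⟨he, ht, _⟩, ⟨_, _, hh⟩⟩
    exact ⟨⟨he, fun h => ht (Or.inl h), hh.1⟩, ⟨he, fun h => ht (Or.inr h), hh.2⟩⟩
  calc dcut tl hd Av (X ∪ Y) + dcut tl hd Av (X ∩ Y)
      = B1.ncard + B2.ncard := rfl
    _ = (B1 ∪ B2).ncard + (B1 ∩ B2).ncard :=
        (Set.ncard_union_add_ncard_inter B1 B2 (Set.toFinite _) (Set.toFinite _)).symm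
    _ ≤ (A1 ∪ A2).ncard + (A1 ∩ A2).ncard :=
        Nat.add_le_add (Set.ncard_le_ncard hU (Set.toFinite _))
          (Set.ncard_le_ncard hI (Set.toFinite _))
    _ = A1.ncard + A2.ncard :=
        Set.ncard_union_add_ncard_inter A1 A2 (Set.toFinite _) (Set.toFinite _)

lemma dcut_congr_along (tl hd : E → V) {Av Av' : Set E} (X : Set V)
    (h : ∀ e, (tl e ∉ X ∧ hd e ∈ X) → (e ∈ Av ↔ e ∈ Av')) :
    dcut tl hd Av X = dcut tl hd Av' X := by
  unfold dcut
  congr 1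
  ext e
  constructor
  · rintro ⟨he, h2⟩; exact ⟨(h e h2).1 he, h2⟩
  · rintro ⟨he, h2⟩; exact ⟨(h e h2).2 he, h2⟩

lemma dcut_nonempty (tl hd : E → V) {Av : Set E} {X : Set V}
    (h : 1 ≤ dcut tl hd Av X) : ∃ e ∈ Av, tl e ∉ X ∧ hd e ∈ X := by
  unfold dcut at h
  obtain ⟨e, he⟩ := Set.nonempty_of_ncard_ne_zero
    (s := {e | e ∈ Av ∧ tl e ∉ X ∧ hd e ∈ X}) (by omega)
  exact ⟨e, he.1, he.2⟩

lemma dcut_diff_singleton (tl hd : E → V) (Av : Set E) (X : Set V) (a : E) :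
    dcut tl hd Av X ≤ dcut tl hd (Av \ {a}) X + 1 := by
  unfold dcut
  have hsub : {e | e ∈ Av ∧ tl e ∉ X ∧ hd e ∈ X} ⊆
      {e | e ∈ Av \ {a} ∧ tl e ∉ X ∧ hd e ∈ X} ∪ {a} := by
    intro e ⟨he, h2⟩
    by_cases h : e = a
    · exact Or.inr h
    · exact Or.inl ⟨⟨he, h⟩, h2⟩
  calc {e | e ∈ Av ∧ tl e ∉ X ∧ hd e ∈ X}.ncard
      ≤ ({e | e ∈ Av \ {a} ∧ tl e ∉ X ∧ hd e ∈ X} ∪ {a}).ncard :=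
        Set.ncard_le_ncard hsub (Set.toFinite _)
    _ ≤ _ := (Set.ncard_union_le _ _).trans (by simp)

/-- vertex set spanned by a partial arborescence. -/
def Sset (hd : E → V) (s : V) (F : Set E) : Set V := insert s (hd '' F)

def Partial (tl hd : E → V) (s : V) (Av F : Set E) : Prop :=
  F ⊆ Av ∧ (∀ e ∈ F, hd e ≠ s) ∧ (∀ e ∈ F, ∀ f ∈ F, hd e = hd f → e = f) ∧
  (∀ e ∈ F, tl e ∈ Sset hd s F) ∧
  (∀ v ∈ Sset hd s F, Relation.ReflTransGen (fun a b => ∃ e ∈ F, tl e = a ∧ hd e = b) s v)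

def Inv (tl hd : E → V) (s : V) (k : ℕ) (Av F : Set E) : Prop :=
  ∀ X : Set V, X.Nonempty → s ∉ X → k - 1 ≤ dcut tl hd (Av \ F) X

lemma augment (tl hd : E → V) (s : V) (k : ℕ) (Av : Set E) (hk : 1 ≤ k)
    (hcond : ∀ X : Set V, X.Nonempty → s ∉ X → k ≤ dcut tl hd Av X)
    (F : Set E) (hP : Partial tl hd s Av F) (hI : Inv tl hd s k Av F)
    (hne : (Sset hd s F)ᶜ.Nonempty) :
    ∃ a ∈ Av, a ∉ F ∧ tl a ∈ Sset hd s F ∧ hd a ∉ Sset hd s F ∧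
      ∀ X : Set V, X.Nonempty → s ∉ X → tl a ∉ X → hd a ∈ X →
        k ≤ dcut tl hd (Av \ F) X := by
  set S := Sset hd s F with hS
  set W := Sᶜ with hW
  have hsS : s ∈ S := Set.mem_insert _ _
  have hsW : s ∉ W := fun h => h hsS
  -- arcs of F never enter a subset of W
  have sub_W : ∀ Y : Set V, Y ⊆ W → Y.Nonempty → k ≤ dcut tl hd (Av \ F) Y := by
    intro Y hYW hYne
    have : dcut tl hd (Av \ F) Y = dcut tl hd Av Y := by
      apply dcut_congr_along
      rintro e ⟨-, hh⟩
      constructor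
      · exact fun h => h.1
      · intro h
        refine ⟨h, fun hF => ?_⟩
        have : hd e ∈ S := Set.mem_insert_iff.mpr (Or.inr ⟨e, hF, rfl⟩)
        exact (hYW hh) this
    rw [this]
    exact hcond Y hYne (fun h => hsW (hYW h))
  by_cases hprob : ∃ Z : Set V, Z.Nonempty ∧ s ∉ Z ∧ dcut tl hd (Av \ F) Z ≤ k - 1 ∧
      (Z ∩ W).Nonempty
  · -- pick a problematic set of minimal cardinality
    set P : Set V → Prop := fun Z => Z.Nonempty ∧ s ∉ Z ∧ dcut tl hd (Av \ F) Z ≤ k - 1 ∧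
      (Z ∩ W).Nonempty with hPdef
    have hNne : {n | ∃ Z, P Z ∧ Z.ncard = n}.Nonempty := by
      obtain ⟨Z, hZ⟩ := hprob
      exact ⟨Z.ncard, Z, hZ, rfl⟩
    obtain ⟨Z, hZP, hZcard⟩ := Nat.sInf_mem hNne
    have hmin : ∀ Z', P Z' → Z.ncard ≤ Z'.ncard := by
      intro Z' hZ'
      rw [hZcard]
      exact Nat.sInf_le ⟨Z', hZ', rfl⟩
    obtain ⟨hZne, hZs, hZd, hZW⟩ := hZP
    -- counting to find the arc
    have h1 : k ≤ dcut tl hd (Av \ F) (Z ∩ W) :=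
      sub_W _ Set.inter_subset_right hZW
    set A : Set E := {e | e ∈ Av \ F ∧ tl e ∉ Z ∧ hd e ∈ Z ∩ W} with hA
    set B : Set E := {e | e ∈ Av \ F ∧ (tl e ∈ Z ∧ tl e ∉ Z ∩ W) ∧ hd e ∈ Z ∩ W} with hB
    have h2 : A.ncard ≤ dcut tl hd (Av \ F) Z := by
      apply Set.ncard_le_ncard _ (Set.toFinite _)
      rintro e ⟨he, ht, hh⟩
      exact ⟨he, ht, hh.1⟩
    have h3 : dcut tl hd (Av \ F) (Z ∩ W) ≤ A.ncard + B.ncard := by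
      have hsub : {e | e ∈ Av \ F ∧ tl e ∉ Z ∩ W ∧ hd e ∈ Z ∩ W} ⊆ A ∪ B := by
        rintro e ⟨he, ht, hh⟩
        by_cases htZ : tl e ∈ Z
        · exact Or.inr ⟨he, ⟨htZ, ht⟩, hh⟩
        · exact Or.inl ⟨he, htZ, hh⟩
      calc dcut tl hd (Av \ F) (Z ∩ W) ≤ (A ∪ B).ncard :=
            Set.ncard_le_ncard hsub (Set.toFinite _)
        _ ≤ _ := Set.ncard_union_le _ _
    have hBpos : 1 ≤ B.ncard := by omega
    obtain ⟨a, haB⟩ := Set.nonempty_of_ncard_ne_zero (s := B) (by omega)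
    obtain ⟨haAv, ⟨htZ, htZW⟩, hhZW⟩ := haB
    have htS : tl a ∈ S := by
      by_contra h
      exact htZW ⟨htZ, h⟩
    refine ⟨a, haAv.1, haAv.2, htS, fun h => hhZW.2 h, ?_⟩
    -- safety
    intro X hXne hXs hXt hXh
    by_contra hcon
    push_neg at hcon
    have hXd : dcut tl hd (Av \ F) X ≤ k - 1 := by omega
    have hsubm := dcut_submodular tl hd (Av \ F) X Z
    have hXZne : (X ∪ Z).Nonempty := hXne.mono Set.subset_union_left
    have hXZs : s ∉ X ∪ Z := by rintro (h | h) <;> [exact hXs h; exact hZs h]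
    have hU := hI (X ∪ Z) hXZne hXZs
    have hIcard : dcut tl hd (Av \ F) (X ∩ Z) ≤ k - 1 := by omega
    have hPXZ : P (X ∩ Z) := by
      refine ⟨⟨hd a, hXh, hhZW.1⟩, fun h => hXs h.1, hIcard, ⟨hd a, ⟨hXh, hhZW.1⟩, hhZW.2⟩⟩
    have hlt : (X ∩ Z).ncard < Z.ncard := by
      apply Set.ncard_lt_ncard _ (Set.toFinite _)
      constructor
      · exact Set.inter_subset_right
      · intro hsub
        exact hXt (hsub htZ).1
    have := hmin _ hPXZ
    omega
  · -- no problematic set : any arc entering W works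
    push_neg at hprob
    have hWk : k ≤ dcut tl hd (Av \ F) W := sub_W W le_rfl hne
    obtain ⟨a, haAv, hat, hah⟩ := dcut_nonempty tl hd (le_trans hk hWk)
    have htS : tl a ∈ S := not_not.mp hat
    refine ⟨a, haAv.1, haAv.2, htS, hah, ?_⟩
    intro X hXne hXs hXt hXh
    by_contra hcon
    push_neg at hcon
    have h1 : dcut tl hd (Av \ F) X ≤ k - 1 := by omega
    have h2 := hprob X hXne hXs h1
    have h3 : hd a ∈ X ∩ W := ⟨hXh, hah⟩
    rw [h2] at h3
    exact h3

lemma grow (tl hd : E → V) (s : V) (k : ℕ) (Av : Set E)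
    (F : Set E) (hP : Partial tl hd s Av F) (hI : Inv tl hd s k Av F)
    (a : E) (haAv : a ∈ Av) (haF : a ∉ F) (htS : tl a ∈ Sset hd s F)
    (hhS : hd a ∉ Sset hd s F)
    (hsafe : ∀ X : Set V, X.Nonempty → s ∉ X → tl a ∉ X → hd a ∈ X →
      k ≤ dcut tl hd (Av \ F) X) :
    Partial tl hd s Av (insert a F) ∧ Inv tl hd s k Av (insert a F) ∧
      Sset hd s (insert a F) = insert (hd a) (Sset hd s F) := by
  obtain ⟨hFA, hFs, hFinj, hFt, hFr⟩ := hP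
  have hSset : Sset hd s (insert a F) = insert (hd a) (Sset hd s F) := by
    unfold Sset
    rw [Set.image_insert_eq]
    ext v
    simp only [Set.mem_insert_iff]
    tauto
  have hstep_mono : ∀ x y, (∃ e ∈ F, tl e = x ∧ hd e = y) →
      (∃ e ∈ insert a F, tl e = x ∧ hd e = y) := by
    rintro x y ⟨e, he, h1, h2⟩
    exact ⟨e, Set.mem_insert_of_mem _ he, h1, h2⟩
  refine ⟨⟨?_, ?_, ?_, ?_, ?_⟩, ?_, hSset⟩
  · intro e he
    rcases he with rfl | he
    · exact haAv
    · exact hFA he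
  · intro e he
    rcases he with rfl | he
    · exact fun h => hhS (h ▸ Set.mem_insert _ _)
    · exact hFs e he
  · intro e he f hf heq
    rcases he with rfl | he <;> rcases hf with rfl | hf
    · rfl
    · refine absurd (Set.mem_insert_of_mem _ ?_) hhS
      rw [heq]; exact Set.mem_image_of_mem hd hf
    · refine absurd (Set.mem_insert_of_mem _ ?_) hhS
      rw [← heq]; exact Set.mem_image_of_mem hd he
    · exact hFinj e he f hf heq
  · intro e he
    rw [hSset]
    rcases he with rfl | he
    · exact Set.mem_insert_of_mem _ htS
    · exact Set.mem_insert_of_mem _ (hFt e he)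
  · intro v hv
    rw [hSset] at hv
    rcases hv with rfl | hv
    · exact Relation.ReflTransGen.tail
        (Relation.ReflTransGen.mono hstep_mono _ _ (hFr _ htS)) ⟨a, Set.mem_insert _ _, rfl, rfl⟩
    · exact Relation.ReflTransGen.mono hstep_mono _ _ (hFr v hv)
  · intro X hXne hXs
    have hsub : Av \ insert a F = (Av \ F) \ {a} := by
      ext e; simp only [Set.mem_diff, Set.mem_insert_iff, Set.mem_singleton_iff]; tauto
    rw [hsub]
    by_cases hent : tl a ∉ X ∧ hd a ∈ X
    · have := hsafe X hXne hXs hent.1 hent.2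
      have := dcut_diff_singleton tl hd (Av \ F) X a
      omega
    · have heq : dcut tl hd ((Av \ F) \ {a}) X = dcut tl hd (Av \ F) X := by
        unfold dcut
        congr 1
        ext e
        simp only [Set.mem_setOf_eq, Set.mem_diff, Set.mem_singleton_iff]
        constructor
        · rintro ⟨⟨h1, _⟩, h2⟩; exact ⟨h1, h2⟩
        · rintro ⟨h1, h2⟩
          refine ⟨⟨h1, ?_⟩, h2⟩
          rintro rfl
          exact hent ⟨h2.1, h2.2⟩
      rw [heq]
      exact hI X hXne hXs

lemma complete (tl hd : E → V) (s : V) (k : ℕ) (Av : Set E) (hk : 1 ≤ k)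
    (hcond : ∀ X : Set V, X.Nonempty → s ∉ X → k ≤ dcut tl hd Av X) :
    ∀ (n : ℕ) (F : Set E), Partial tl hd s Av F → Inv tl hd s k Av F →
      (Sset hd s F)ᶜ.ncard ≤ n →
      ∃ B : Set E, Partial tl hd s Av B ∧ Inv tl hd s k Av B ∧
        Sset hd s B = Set.univ := by
  intro n
  induction n with
  | zero =>
    intro F hP hI hcard
    refine ⟨F, hP, hI, ?_⟩
    have : (Sset hd s F)ᶜ = ∅ := by
      rw [← Set.ncard_eq_zero (Set.toFinite _)]; omega
    rw [← Set.compl_empty, ← this, compl_compl]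
  | succ n ih =>
    intro F hP hI hcard
    by_cases h : (Sset hd s F)ᶜ.Nonempty
    · obtain ⟨a, haAv, haF, htS, hhS, hsafe⟩ :=
        augment tl hd s k Av hk hcond F hP hI h
      obtain ⟨hP', hI', hSeq⟩ := grow tl hd s k Av F hP hI a haAv haF htS hhS hsafe
      have hcompl : (Sset hd s (insert a F))ᶜ = (Sset hd s F)ᶜ \ {hd a} := by
        rw [hSeq]
        ext v
        simp only [Set.mem_compl_iff, Set.mem_insert_iff, Set.mem_diff,
          Set.mem_singleton_iff]
        tauto
      have hmem : hd a ∈ (Sset hd s F)ᶜ := hhS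
      have hle : (Sset hd s (insert a F))ᶜ.ncard ≤ n := by
        rw [hcompl, Set.ncard_diff_singleton_of_mem hmem]
        have : 0 < (Sset hd s F)ᶜ.ncard :=
          (Set.ncard_pos (Set.toFinite _)).mpr ⟨hd a, hmem⟩
        omega
      exact ih (insert a F) hP' hI' hle
    · refine ⟨F, hP, hI, ?_⟩
      rw [Set.not_nonempty_iff_eq_empty] at h
      rw [← Set.compl_empty, ← h, compl_compl]

lemma exists_branching (tl hd : E → V) (s : V) (k : ℕ) (Av : Set E) (hk : 1 ≤ k)
    (hcond : ∀ X : Set V, X.Nonempty → s ∉ X → k ≤ dcut tl hd Av X) :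
    ∃ B : Set E, B ⊆ Av ∧ IsOutBranchingM tl hd s B ∧
      ∀ X : Set V, X.Nonempty → s ∉ X → k - 1 ≤ dcut tl hd (Av \ B) X := by
  have hP0 : Partial tl hd s Av (∅ : Set E) := by
    refine ⟨Set.empty_subset _, by simp, by simp, by simp, ?_⟩
    intro v hv
    have : v = s := by
      unfold Sset at hv
      simpa using hv
    subst this
    exact Relation.ReflTransGen.refl
  have hI0 : Inv tl hd s k Av (∅ : Set E) := by
    intro X h1 h2
    rw [Set.diff_empty]
    have := hcond X h1 h2
    omega
  obtain ⟨B, hP, hI, hfull⟩ := complete tl hd s k Av hk hcond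
    ((Sset hd s (∅ : Set E))ᶜ.ncard) ∅ hP0 hI0 le_rfl
  obtain ⟨hBA, hBs, hBinj, hBt, hBr⟩ := hP
  refine ⟨B, hBA, ⟨hBs, ?_, ?_⟩, hI⟩
  · intro v hv
    have hvS : v ∈ Sset hd s B := hfull ▸ Set.mem_univ v
    rcases Set.mem_insert_iff.mp hvS with rfl | ⟨e, he, heq⟩
    · exact absurd rfl hv
    · refine ⟨e, ⟨he, heq⟩, ?_⟩
      rintro f ⟨hf, hfeq⟩
      exact hBinj f hf e he (hfeq.trans heq.symm)
  · intro v
    exact hBr v (hfull ▸ Set.mem_univ v)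

lemma main (tl hd : E → V) (s : V) : ∀ (k : ℕ) (Av : Set E),
    (∀ X : Set V, X.Nonempty → s ∉ X → k ≤ dcut tl hd Av X) →
    ∃ F : Fin k → Set E, (∀ i, F i ⊆ Av ∧ IsOutBranchingM tl hd s (F i)) ∧
      Pairwise fun i j => Disjoint (F i) (F j) := by
  intro k
  induction k with
  | zero =>
    intro Av _
    exact ⟨fun i => i.elim0, fun i => i.elim0, fun i => i.elim0⟩
  | succ k ih =>
    intro Av hcond
    obtain ⟨B, hBA, hBbr, hBinv⟩ :=
      exists_branching tl hd s (k + 1) Av (by omega) hcond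
    have hcond' : ∀ X : Set V, X.Nonempty → s ∉ X → k ≤ dcut tl hd (Av \ B) X := by
      intro X h1 h2
      have := hBinv X h1 h2
      omega
    obtain ⟨F', hF', hdisj⟩ := ih (Av \ B) hcond'
    have hdBF : ∀ j, Disjoint B (F' j) := by
      intro j
      exact Set.disjoint_left.mpr fun e heB heF => ((hF' j).1 heF).2 heB
    refine ⟨Fin.cons B F', ?_, ?_⟩
    · intro i
      induction i using Fin.cases with
      | zero => exact ⟨by simpa using hBA, by simpa using hBbr⟩
      | succ j =>
        rw [Fin.cons_succ]
        exact ⟨(hF' j).1.trans Set.diff_subset, (hF' j).2⟩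
    · intro i j hij
      induction i using Fin.cases with
      | zero =>
        induction j using Fin.cases with
        | zero => exact absurd rfl hij
        | succ j =>
          rw [Fin.cons_zero, Fin.cons_succ]
          exact hdBF j
      | succ i =>
        induction j using Fin.cases with
        | zero =>
          rw [Fin.cons_zero, Fin.cons_succ]
          exact (hdBF i).symm
        | succ j =>
          rw [Fin.cons_succ, Fin.cons_succ]
          exact hdisj (fun h => hij (by rw [h]))

lemma branching_enters (tl hd : E → V) (s : V) (B : Set E)
    (hB : IsOutBranchingM tl hd s B) (X : Set V) (hXne : X.Nonempty) (hXs : s ∉ X) :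
    ∃ e ∈ B, tl e ∉ X ∧ hd e ∈ X := by
  obtain ⟨v, hv⟩ := hXne
  have hreach := hB.2.2 v
  suffices h : ∀ w : V,
      Relation.ReflTransGen (fun a b => ∃ e ∈ B, tl e = a ∧ hd e = b) s w →
      w ∈ X → ∃ e ∈ B, tl e ∉ X ∧ hd e ∈ X by
    exact h v hreach hv
  intro w hw
  induction hw with
  | refl => exact fun h => absurd h hXs
  | tail hab hbc ih =>
    intro hcX
    rename_i b c
    by_cases hbX : b ∈ X
    · exact ih hbX
    · obtain ⟨e, he, het, heh⟩ := hbc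
      exact ⟨e, he, het ▸ hbX, heh ▸ hcX⟩

end EdmondsAux

end EdmondsAuxSect

/-- Edmonds' Branching Theorem. -/
theorem stmt0 {V E : Type*} [Fintype V] [Fintype E]
    (tl hd : E → V) (s : V) (k : ℕ) :
    (∃ F : Fin k → Set E, (∀ i, IsOutBranchingM tl hd s (F i)) ∧
      Pairwise (fun i j => Disjoint (F i) (F j))) ↔
    ∀ X : Set V, X.Nonempty → s ∉ X → k ≤ {e : E | tl e ∉ X ∧ hd e ∈ X}.ncard := by
  have hcut : ∀ X : Set V, EdmondsAux.dcut tl hd (Set.univ : Set E) X =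
      {e : E | tl e ∉ X ∧ hd e ∈ X}.ncard := by
    intro X
    unfold EdmondsAux.dcut
    congr 1
    ext e
    simp
  constructor
  · rintro ⟨F, hF, hdisj⟩ X hXne hXs
    have hpick : ∀ i : Fin k, ∃ e ∈ F i, tl e ∉ X ∧ hd e ∈ X :=
      fun i => EdmondsAux.branching_enters tl hd s (F i) (hF i) X hXne hXs
    choose e he het heh using hpick
    have hinj : Function.Injective e := by
      intro i j hij
      by_contra hne
      exact Set.disjoint_left.mp (hdisj hne) (he i) (hij ▸ he j)
    have hsub : Set.range e ⊆ {e : E | tl e ∉ X ∧ hd e ∈ X} := by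
      rintro _ ⟨i, rfl⟩
      exact ⟨het i, heh i⟩
    calc k = Nat.card (Fin k) := by simp
      _ = Nat.card (Set.range e) := (Nat.card_range_of_injective hinj).symm
      _ = (Set.range e).ncard := Nat.card_coe_set_eq _
      _ ≤ _ := Set.ncard_le_ncard hsub (Set.toFinite _)
  · intro hc
    obtain ⟨F, hF, hdisj⟩ := EdmondsAux.main tl hd s k Set.univ
      (fun X h1 h2 => (hcut X).symm ▸ hc X h1 h2)
    exact ⟨F, fun i => (hF i).2, hdisj⟩
end

section
/- Every strongly connected semicomplete digraph on at least 2 vertices has a Hamiltonian cycle. -/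
variable {V : Type*}

section CamionAux

open List

variable {A : V → V → Prop}

/-- A (directed) cycle: nonempty, no repeated vertices, consecutive arcs, wrap arc. -/
private def CamCycle (A : V → V → Prop) (p : List V) : Prop :=
  p ≠ [] ∧ p.Nodup ∧ p.Chain' A ∧
    ∀ a b : V, p.getLast? = some a → p.head? = some b → A a b

private lemma cam_mem_getLast? {p : List V} {a : V} (h : p.getLast? = some a) : a ∈ p := by
  cases p with
  | nil => simp at h
  | cons x t =>
    rw [List.getLast?_eq_getLast (l := x :: t) (by simp)] at h
    injection h with h
    exact h ▸ List.getLast_mem _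

private lemma cam_mem_head? {p : List V} {a : V} (h : p.head? = some a) : a ∈ p := by
  cases p with
  | nil => simp at h
  | cons x t => injection h with h; simp [← h]

private lemma cam_reach_closed {T : Set V} (hT : ∀ a b, a ∈ T → A a b → b ∈ T)
    {x y : V} (h : Relation.ReflTransGen A x y) (hx : x ∈ T) : y ∈ T := by
  induction h with
  | refl => exact hx
  | tail _ hbc ih => exact hT _ _ ih hbc

private lemma cam_pathArcs_decomp : ∀ {p : List V} {x y : V}, (x, y) ∈ pathArcs p →
    ∃ a b, p = a ++ x :: y :: b := by
  intro p
  induction p with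
  | nil => intro x y h; simp [pathArcs] at h
  | cons z t ih =>
    intro x y h
    cases t with
    | nil => simp [pathArcs] at h
    | cons w t' =>
      have h' : (x, y) ∈ (z, w) :: pathArcs (w :: t') := h
      rcases List.mem_cons.1 h' with h'' | h''
      · injection h'' with h1 h2
        exact ⟨[], t', by simp [h1, h2]⟩
      · obtain ⟨a, b, hab⟩ := ih h''
        exact ⟨z :: a, b, by rw [List.cons_append, ← hab]⟩

private lemma cam_cycle_append {a b : List V} (h : CamCycle A (a ++ b)) :
    CamCycle A (b ++ a) := by
  obtain ⟨hne, hnd, hch, hwrap⟩ := h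
  rcases eq_or_ne a [] with rfl | ha
  · rw [List.append_nil]; exact ⟨hne, hnd, hch, hwrap⟩
  rcases eq_or_ne b [] with rfl | hb
  · rw [List.nil_append]
    rw [List.append_nil] at hne hnd hch hwrap
    exact ⟨hne, hnd, hch, hwrap⟩
  simp only [List.Chain', List.isChain_append] at hch
  obtain ⟨hca, hcb, hjoin⟩ := hch
  refine ⟨by simp [hb], (List.perm_append_comm).nodup hnd, ?_, ?_⟩
  · simp only [List.Chain', List.isChain_append]
    refine ⟨hcb, hca, fun u hu w hw => ?_⟩
    simp only [Option.mem_def] at hu hw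
    exact hwrap u w (by rw [List.getLast?_append_of_ne_nil _ hb]; exact hu)
      (by rw [List.head?_append_of_ne_nil _ ha]; exact hw)
  · intro u w hu hw
    rw [List.getLast?_append_of_ne_nil _ ha] at hu
    rw [List.head?_append_of_ne_nil _ hb] at hw
    exact hjoin u (Option.mem_def.2 hu) w (Option.mem_def.2 hw)

private lemma cam_cycle_rot {p q : List V} (h : CamCycle A p) (hr : p.IsRotated q) :
    CamCycle A q := by
  obtain ⟨n, rfl⟩ := hr
  rw [List.rotate_eq_drop_append_take_mod]
  apply cam_cycle_append
  rw [List.take_append_drop]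
  exact h

/-- Cyclically consecutive pair of `p`. -/
private def CamCC (p : List V) (x y : V) : Prop :=
  ∃ r : List V, p.IsRotated r ∧ r.getLast? = some x ∧ r.head? = some y

private lemma camCC_mem {p : List V} {x y : V} (h : CamCC p x y) : x ∈ p ∧ y ∈ p := by
  obtain ⟨r, hr, hx, hy⟩ := h
  exact ⟨hr.perm.mem_iff.2 (cam_mem_getLast? hx), hr.perm.mem_iff.2 (cam_mem_head? hy)⟩

private lemma camCC_of_arcs {p r : List V} {x y : V} (hr : p.IsRotated r)
    (h : (x, y) ∈ pathArcs r) : CamCC p x y := by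
  obtain ⟨c, d, rfl⟩ := cam_pathArcs_decomp h
  refine ⟨(y :: d) ++ (c ++ [x]), ?_, ?_, rfl⟩
  · refine hr.trans ?_
    rw [show c ++ x :: y :: d = (c ++ [x]) ++ (y :: d) from by simp]
    exact List.isRotated_append
  · rw [← List.append_assoc]; exact List.getLast?_concat

private lemma camCC_succ {p : List V} {y : V} (hy : y ∈ p) : ∃ s, CamCC p y s ∧ s ∈ p := by
  obtain ⟨a, b, rfl⟩ := List.append_of_mem hy
  have hne : (b ++ (a ++ [y])) ≠ [] := by simp
  refine ⟨(b ++ (a ++ [y])).head hne, ⟨(b ++ (a ++ [y])), ?_, ?_, List.head?_eq_head hne⟩, ?_⟩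
  · rw [show a ++ y :: b = (a ++ [y]) ++ b from by simp]
    exact List.isRotated_append
  · rw [← List.append_assoc]; exact List.getLast?_concat
  · have hrot : (a ++ y :: b).IsRotated (b ++ (a ++ [y])) := by
      rw [show a ++ y :: b = (a ++ [y]) ++ b from by simp]
      exact List.isRotated_append
    exact hrot.perm.symm.subset (List.head_mem hne)

private lemma cam_back_prop {v : V} :
    ∀ q : List V, (∀ x y : V, (x, y) ∈ pathArcs q → A v y → A v x) →
      (∀ a, q.getLast? = some a → A v a) → ∀ z ∈ q, A v z
  | [] => by intro _ _ z hz; simp at hz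
  | [x] => by
      intro _ hl z hz
      simp at hz; subst hz; exact hl z rfl
  | x :: y :: t => by
      intro harc hl z hz
      have harc' : ∀ a b : V, (a, b) ∈ pathArcs (y :: t) → A v b → A v a := by
        intro a b hab
        exact harc a b (List.mem_cons_of_mem (x, y) hab)
      have hl' : ∀ a, (y :: t).getLast? = some a → A v a := by
        intro a ha
        exact hl a (by rw [List.getLast?_cons_cons]; exact ha)
      have ih := cam_back_prop (y :: t) harc' hl'
      rcases List.mem_cons.1 hz with rfl | hz'
      · exact harc z y (List.mem_cons_self) (ih y (List.mem_cons_self))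
      · exact ih z hz'

private lemma cam_reach_simple {x y : V} (h : Relation.ReflTransGen A x y) :
    ∃ p : List V, p.head? = some x ∧ p.getLast? = some y ∧ p.Nodup ∧ p.Chain' A := by
  induction h with
  | refl => exact ⟨[x], rfl, rfl, List.nodup_singleton x, List.isChain_singleton x⟩
  | @tail b c hab hbc ih =>
    obtain ⟨p, h1, h2, h3, h4⟩ := ih
    by_cases hc : c ∈ p
    · obtain ⟨a', b', rfl⟩ := List.append_of_mem hc
      refine ⟨a' ++ [c], ?_, List.getLast?_concat, ?_, ?_⟩
      · cases a' with
        | nil => exact h1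
        | cons u t => exact h1
      · refine List.Nodup.sublist ?_ h3
        exact List.Sublist.append_left (List.Sublist.cons₂ c (List.nil_sublist b')) a'
      · exact h4.prefix ⟨b', by simp⟩
    · have hpne : p ≠ [] := by intro hp; rw [hp] at h1; simp at h1
      refine ⟨p ++ [c], ?_, List.getLast?_concat, ?_, ?_⟩
      · rw [List.head?_append_of_ne_nil _ hpne]; exact h1
      · rw [List.nodup_append]
        refine ⟨h3, List.nodup_singleton c, fun u hu b hu' hub => ?_⟩
        subst hub; simp at hu'; subst hu'; exact hc hu
      · simp only [List.Chain', List.isChain_append]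
        refine ⟨h4, List.isChain_singleton c, fun u hu w hw => ?_⟩
        simp only [Option.mem_def] at hu hw
        rw [h2] at hu
        injection hu with hu
        simp only [List.head?_cons] at hw
        injection hw with hw
        subst hu; subst hw
        exact hbc

private lemma cam_extend (hsc : Semicomplete A) (hstrong : Strong A)
    {p : List V} {v : V} (hcyc : CamCycle A p) (hv : v ∉ p) :
    ∃ q : List V, CamCycle A q ∧ p.length < q.length := by
  classical
  obtain ⟨hne, hnd, hch, hwrap⟩ := hcyc
  by_cases hins : ∃ u x y : V, u ∉ p ∧ CamCC p x y ∧ A x u ∧ A u y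
  · obtain ⟨u, x, y, hu, ⟨r, hr, hlast, hhead⟩, hxu, huy⟩ := hins
    obtain ⟨hrne, hrnd, hrch, hrwrap⟩ := cam_cycle_rot ⟨hne, hnd, hch, hwrap⟩ hr
    refine ⟨r ++ [u], ⟨by simp, ?_, ?_, ?_⟩, ?_⟩
    · rw [List.nodup_append]
      refine ⟨hrnd, List.nodup_singleton u, fun a ha b ha' hab => ?_⟩
      subst hab; simp at ha'; subst ha'
      exact hu (hr.perm.symm.subset ha)
    · simp only [List.Chain', List.isChain_append]
      refine ⟨hrch, List.isChain_singleton u, fun a ha b hb => ?_⟩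
      simp only [Option.mem_def] at ha hb
      rw [hlast] at ha
      injection ha with ha
      simp only [List.head?_cons] at hb
      injection hb with hb
      subst ha; subst hb
      exact hxu
    · intro a b hla hhb
      rw [List.getLast?_concat] at hla
      rw [List.head?_append_of_ne_nil _ hrne, hhead] at hhb
      injection hla with hla
      injection hhb with hhb
      subst hla; subst hhb
      exact huy
    · have hlen := hr.perm.length_eq
      simp only [List.length_append, List.length_cons, List.length_nil]
      omega
  · have hdich : ∀ u, u ∉ p →
        (∀ z ∈ p, A u z ∧ ¬ A z u) ∨ (∀ z ∈ p, ¬ A u z ∧ A z u) := by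
      intro u hu
      by_cases hout : ∃ z ∈ p, A u z
      · left
        obtain ⟨y0, hy0, huy0⟩ := hout
        obtain ⟨a, b, hp⟩ := List.append_of_mem hy0
        have hrot : p.IsRotated (b ++ (a ++ [y0])) := by
          rw [hp, show a ++ y0 :: b = (a ++ [y0]) ++ b from by simp]
          exact List.isRotated_append
        have hrlast : (b ++ (a ++ [y0])).getLast? = some y0 := by
          rw [← List.append_assoc]; exact List.getLast?_concat
        have hall : ∀ z ∈ (b ++ (a ++ [y0])), A u z := by
          apply cam_back_prop
          · intro s t hst hut
            have hcc := camCC_of_arcs hrot hst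
            have hs : s ∈ p := (camCC_mem hcc).1
            have hsu : s ≠ u := fun h => hu (h ▸ hs)
            rcases hsc u s (fun h => hsu h.symm) with h | h
            · exact h
            · exact absurd hut (fun hut' => hins ⟨u, s, t, hu, hcc, h, hut'⟩)
          · intro a' ha'
            rw [hrlast] at ha'
            injection ha' with ha'
            subst ha'
            exact huy0
        have hallp : ∀ z ∈ p, A u z := fun z hz => hall z (hrot.perm.subset hz)
        refine fun z hz => ⟨hallp z hz, fun hzu => ?_⟩
        obtain ⟨s, hcc, hsp⟩ := camCC_succ hz
        exact hins ⟨u, z, s, hu, hcc, hzu, hallp s hsp⟩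
      · right
        push_neg at hout
        exact fun z hz => ⟨hout z hz,
          (hsc z u (fun h => hu (h ▸ hz))).resolve_right (hout z hz)⟩
    have hy0 : p.head hne ∈ p := List.head_mem hne
    have hzw : ∃ z w : V, z ∉ p ∧ w ∉ p ∧ (∀ y ∈ p, ¬ A z y ∧ A y z) ∧
        (∀ y ∈ p, A w y ∧ ¬ A y w) ∧ A z w := by
      by_contra hno
      push_neg at hno
      by_cases hW : ∃ w, w ∉ p ∧ ∀ y ∈ p, A w y ∧ ¬ A y w
      · obtain ⟨w, hwnp, hw⟩ := hW
        have hclosed : ∀ a b, a ∈ {a : V | a ∈ p ∨ (a ∉ p ∧ ∀ y ∈ p, ¬ A a y ∧ A y a)} →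
            A a b → b ∈ {a : V | a ∈ p ∨ (a ∉ p ∧ ∀ y ∈ p, ¬ A a y ∧ A y a)} := by
          intro a b ha hab
          by_cases hbp : b ∈ p
          · exact Or.inl hbp
          rcases hdich b hbp with hbW | hbZ
          · rcases ha with hap | ⟨hanp, haZ⟩
            · exact absurd hab (hbW a hap).2
            · exact absurd hab (hno a b hanp hbp haZ hbW)
          · exact Or.inr ⟨hbp, hbZ⟩
        have hwT := cam_reach_closed hclosed (hstrong (p.head hne) w) (Or.inl hy0)
        rcases hwT with h | ⟨-, hZ⟩
        · exact hwnp h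
        · exact (hZ _ hy0).1 (hw _ hy0).1
      · have hvZ : ∀ y ∈ p, ¬ A v y ∧ A y v :=
          (hdich v hv).resolve_left (fun h => hW ⟨v, hv, h⟩)
        have hclosed : ∀ a b, a ∈ {a : V | a ∉ p ∧ ∀ y ∈ p, ¬ A a y ∧ A y a} →
            A a b → b ∈ {a : V | a ∉ p ∧ ∀ y ∈ p, ¬ A a y ∧ A y a} := by
          rintro a b ⟨hanp, haZ⟩ hab
          by_cases hbp : b ∈ p
          · exact absurd hab (haZ b hbp).1
          rcases hdich b hbp with hbW | hbZ
          · exact absurd ⟨b, hbp, hbW⟩ hW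
          · exact ⟨hbp, hbZ⟩
        have := cam_reach_closed hclosed (hstrong v (p.head hne)) ⟨hv, hvZ⟩
        exact this.1 hy0
    obtain ⟨z, w, hznp, hwnp, hz, hw, hzw⟩ := hzw
    have hzwne : z ≠ w := by
      intro h
      exact (h ▸ (hz _ hy0).2 : A (p.head hne) w) |> (hw _ hy0).2
    refine ⟨p ++ [z, w], ⟨by simp, ?_, ?_, ?_⟩, ?_⟩
    · rw [List.nodup_append]
      refine ⟨hnd, by simp [hzwne], fun a ha b ha' hab => ?_⟩
      subst hab; simp at ha'
      rcases ha' with rfl | rfl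
      · exact hznp ha
      · exact hwnp ha
    · simp only [List.Chain', List.isChain_append]
      refine ⟨hch, ?_, fun a ha b hb => ?_⟩
      · exact List.isChain_pair.2 hzw
      · simp only [Option.mem_def] at ha hb
        simp only [List.head?_cons] at hb
        injection hb with hb
        subst hb
        exact (hz a (cam_mem_getLast? ha)).2
    · intro a b hla hhb
      rw [List.getLast?_append_of_ne_nil _ (by simp : ([z, w] : List V) ≠ [])] at hla
      simp only [List.getLast?_cons_cons] at hla
      have : ([w] : List V).getLast? = some w := rfl
      rw [this] at hla
      injection hla with hla
      subst hla
      rw [List.head?_append_of_ne_nil _ hne] at hhb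
      exact (hw b (cam_mem_head? hhb)).1
    · simp only [List.length_append, List.length_cons, List.length_nil]
      omega

private lemma cam_grow [Fintype V] (hsc : Semicomplete A) (hstrong : Strong A) :
    ∀ (n : ℕ) (p : List V), CamCycle A p → Fintype.card V ≤ p.length + n →
      ∃ q : List V, CamCycle A q ∧ ∀ v : V, v ∈ q
  | 0, p, hc, hcard => by
      classical
      refine ⟨p, hc, fun v => ?_⟩
      have hl := List.toFinset_card_of_nodup hc.2.1
      have h1 : Fintype.card V ≤ p.toFinset.card := by rw [hl]; simpa using hcard
      have h2 : p.toFinset = Finset.univ :=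
        Finset.eq_univ_of_card _ (le_antisymm (Finset.card_le_univ _) h1)
      exact List.mem_toFinset.1 (h2 ▸ Finset.mem_univ v)
  | n + 1, p, hc, hcard => by
      classical
      by_cases hall : ∀ v : V, v ∈ p
      · exact ⟨p, hc, hall⟩
      · push_neg at hall
        obtain ⟨v, hv⟩ := hall
        obtain ⟨q, hq, hlen⟩ := cam_extend hsc hstrong hc hv
        exact cam_grow hsc hstrong n q hq (by omega)

end CamionAux

/-- Camion's theorem for semicomplete digraphs: every strong semicomplete
digraph on at least 2 vertices has a Hamiltonian cycle. -/
theorem stmt2 [Fintype V] (A : V → V → Prop) (hsc : Semicomplete A)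
    (hirr : Irreflexive A) (hstrong : Strong A) (h2 : 2 ≤ Fintype.card V) :
    ∃ p : List V, p.Nodup ∧ (∀ v : V, v ∈ p) ∧ p.Chain' A ∧
      ∀ a b : V, p.getLast? = some a → p.head? = some b → A a b := by
  classical
  obtain ⟨x, y, hxy⟩ := Fintype.exists_pair_of_one_lt_card (α := V) (by omega)
  have hbase : ∃ p : List V, CamCycle A p := by
    rcases hsc x y hxy with h | h
    · obtain ⟨q, h1, h2, h3, h4⟩ := cam_reach_simple (hstrong y x)
      refine ⟨q, ?_, h3, h4, ?_⟩
      · intro hq; rw [hq] at h1; simp at h1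
      · intro a b ha hb
        rw [h2] at ha; rw [h1] at hb
        injection ha with ha; injection hb with hb
        subst ha; subst hb
        exact h
    · obtain ⟨q, h1, h2, h3, h4⟩ := cam_reach_simple (hstrong x y)
      refine ⟨q, ?_, h3, h4, ?_⟩
      · intro hq; rw [hq] at h1; simp at h1
      · intro a b ha hb
        rw [h2] at ha; rw [h1] at hb
        injection ha with ha; injection hb with hb
        subst ha; subst hb
        exact h
  obtain ⟨p0, hp0⟩ := hbase
  obtain ⟨q, hq, hall⟩ := cam_grow hsc hstrong (Fintype.card V) p0 hp0
    (Nat.le_add_left _ _)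
  exact ⟨q, hq.2.1, hall, hq.2.2.1, hq.2.2.2⟩
end

section
/- Every strongly connected semicomplete digraph D has a Hamiltonian directed path starting at any prescribed vertex x. -/
variable {V : Type*}

open Relation

lemma reachOn_mono' {A : V → V → Prop} {S S' : Set V} (h : S ⊆ S') {a b : V}
    (hr : ReachOn A S a b) : ReachOn A S' a b :=
  ReflTransGen.mono (fun x y hxy => ⟨h hxy.1, h hxy.2.1, hxy.2.2⟩) _ _ hr

lemma king_lemma {A : V → V → Prop} (hsc : Semicomplete A) (S : Finset V) :
    S.Nonempty → ∃ w ∈ S, ∀ t ∈ S, ReachOn A ↑S w t := by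
  classical
  induction S using Finset.induction with
  | empty => intro h; simp at h
  | @insert v S' hv ih =>
    intro _
    rcases S'.eq_empty_or_nonempty with rfl | hS'
    · refine ⟨v, by simp, ?_⟩
      intro t ht
      simp only [Finset.mem_insert, Finset.notMem_empty, or_false] at ht
      subst ht; exact ReflTransGen.refl
    · obtain ⟨w, hwS, hreach⟩ := ih hS'
      have hwv : w ≠ v := fun h => hv (h ▸ hwS)
      have hsub : (↑S' : Set V) ⊆ ↑(insert v S') := by
        intro z hz; simp only [Finset.coe_insert, Set.mem_insert_iff]
        exact Or.inr hz
      rcases hsc w v hwv with hwv' | hvw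
      · refine ⟨w, by simp [hwS], ?_⟩
        intro t ht
        simp only [Finset.mem_insert] at ht
        rcases ht with rfl | ht
        · exact ReflTransGen.single ⟨by simp [hwS], by simp, hwv'⟩
        · exact reachOn_mono' hsub (hreach t ht)
      · refine ⟨v, by simp, ?_⟩
        intro t ht
        simp only [Finset.mem_insert] at ht
        rcases ht with rfl | ht
        · exact ReflTransGen.refl
        · exact ReflTransGen.trans
            (ReflTransGen.single ⟨by simp, by simp [hwS], hvw⟩)
            (reachOn_mono' hsub (hreach t ht))

lemma split_lemma {R : V → V → Prop} {x y : V} (h : ReflTransGen R x y) (hy : y ≠ x) :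
    ∃ u, R x u ∧ ReflTransGen (fun a b => R a b ∧ a ≠ x ∧ b ≠ x) u y := by
  induction h with
  | refl => exact absurd rfl hy
  | @tail b c hxb hbc ih =>
    by_cases hb : b = x
    · subst hb; exact ⟨c, hbc, ReflTransGen.refl⟩
    · obtain ⟨u, hxu, hp⟩ := ih hb
      exact ⟨u, hxu, hp.tail ⟨hbc, hb, hy⟩⟩

lemma ham_from_reach {A : V → V → Prop} (hsc : Semicomplete A) (hirr : Irreflexive A) :
    ∀ n (S : Finset V), S.card = n → ∀ x ∈ S, (∀ y ∈ S, ReachOn A ↑S x y) →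
      ∃ p : List V, p.Nodup ∧ p.Chain' A ∧ p.head? = some x ∧ ∀ v, v ∈ p ↔ v ∈ S := by
  classical
  intro n
  induction n using Nat.strong_induction_on with
  | _ n ih =>
    intro S hcard x hx hreach
    by_cases hT : S.erase x = ∅
    · refine ⟨[x], by simp, List.isChain_singleton _, rfl, ?_⟩
      intro v
      simp only [List.mem_singleton]
      constructor
      · rintro rfl; exact hx
      · intro hv
        by_contra hne
        have : v ∈ S.erase x := Finset.mem_erase.mpr ⟨hne, hv⟩
        rw [hT] at this; simp at this
    · set T := S.erase x with hTdef
      have hTne : T.Nonempty := Finset.nonempty_iff_ne_empty.mpr hT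
      obtain ⟨w0, hw0, hking⟩ := king_lemma hsc T hTne
      have hw0x : w0 ≠ x := (Finset.mem_erase.mp hw0).1
      have hw0S : w0 ∈ S := (Finset.mem_erase.mp hw0).2
      obtain ⟨u, hxu, hpath⟩ := split_lemma (hreach w0 hw0S) hw0x
      obtain ⟨hxS, huS, hAxu⟩ := hxu
      have hux : u ≠ x := fun h => hirr x (h ▸ hAxu)
      have huT : u ∈ T := Finset.mem_erase.mpr ⟨hux, by exact_mod_cast huS⟩
      have hreachT : ∀ t ∈ T, ReachOn A ↑T u t := by
        intro t ht
        have h1 : ReachOn A ↑T u w0 := by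
          refine ReflTransGen.mono ?_ _ _ hpath
          rintro a b ⟨⟨haS, hbS, hab⟩, hax, hbx⟩
          refine ⟨?_, ?_, hab⟩
          · exact Finset.mem_coe.mpr (Finset.mem_erase.mpr ⟨hax, by exact_mod_cast haS⟩)
          · exact Finset.mem_coe.mpr (Finset.mem_erase.mpr ⟨hbx, by exact_mod_cast hbS⟩)
        exact h1.trans (hking t ht)
      have hcardT : T.card < n := by
        rw [← hcard]; exact Finset.card_erase_lt_of_mem hx
      obtain ⟨q, hnd, hch, hhd, hmem⟩ := ih T.card hcardT T rfl u huT hreachT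
      have hxq : x ∉ q := by
        intro hxq
        have := (hmem x).mp hxq
        exact (Finset.mem_erase.mp this).1 rfl
      refine ⟨x :: q, ?_, ?_, rfl, ?_⟩
      · exact List.nodup_cons.mpr ⟨hxq, hnd⟩
      · cases q with
        | nil => exact List.isChain_singleton _
        | cons a q' =>
          simp only [List.head?_cons, Option.some.injEq] at hhd
          subst hhd
          exact List.isChain_cons_cons.mpr ⟨hAxu, hch⟩
      · intro v
        simp only [List.mem_cons, hmem v, hTdef, Finset.mem_erase]
        constructor
        · rintro (rfl | ⟨_, hv⟩)
          · exact hx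
          · exact hv
        · intro hv
          by_cases hvx : v = x
          · exact Or.inl hvx
          · exact Or.inr ⟨hvx, hv⟩

/-- Every strong semicomplete digraph has a Hamiltonian path starting at any
prescribed vertex `x`. -/
theorem stmt3 [Fintype V] (A : V → V → Prop) (hsc : Semicomplete A)
    (hirr : Irreflexive A) (hstrong : Strong A) (x : V) :
    ∃ (y : V) (p : List V), IsPathOn A x y p ∧ ∀ v : V, v ∈ p := by
  classical
  have hreach : ∀ y ∈ (Finset.univ : Finset V), ReachOn A ↑(Finset.univ : Finset V) x y := by
    intro y _
    exact Relation.ReflTransGen.mono (fun a b hab => ⟨by simp, by simp, hab⟩) _ _ (hstrong x y)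
  obtain ⟨p, hnd, hch, hhd, hmem⟩ :=
    ham_from_reach hsc hirr (Finset.univ.card) Finset.univ rfl x (by simp) hreach
  have hpne : p ≠ [] := by intro h; subst h; simp at hhd
  refine ⟨p.getLast hpne, p, ⟨hpne, hhd, ?_, hnd, hch⟩, fun v => (hmem v).mpr (by simp)⟩
  exact List.getLast?_eq_getLast hpne
end

section
/- If D is a non-strong semicomplete digraph with strong components D_1,...,D_p (p ≥ 2) in the unique acyclic ordering, then D has a Hamiltonian directed path from x to y for every choice of x in D_1 and y in D_p. -/
variable {V : Type*}

universe u

section Aux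

variable {A : V → V → Prop}

lemma mem_outSet_of_reach {a b : V} (hb : b ∈ OutSet A) (hab : Reach A a b) : a ∈ OutSet A :=
  fun u => Relation.ReflTransGen.trans hab (hb u)

lemma mem_inSet_of_reach {a b : V} (ha : a ∈ InSet A) (hab : Reach A a b) : b ∈ InSet A :=
  fun u => Relation.ReflTransGen.trans (ha u) hab

lemma strong_of_out_in {a : V} (ha : a ∈ OutSet A) (hb : a ∈ InSet A) : Strong A :=
  fun u v => Relation.ReflTransGen.trans (hb u) (ha v)

lemma arc_into_inSet (hsc : Semicomplete A) {u v : V} (hu : u ∉ InSet A) (hv : v ∈ InSet A) :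
    A u v := by
  have hne : u ≠ v := fun h => hu (h ▸ hv)
  rcases hsc u v hne with h | h
  · exact h
  · exact absurd (mem_inSet_of_reach hv (Relation.ReflTransGen.single h)) hu

lemma chain'_head_reach :
    ∀ (p : List V), p.Chain' A → ∀ (a : V), p.head? = some a → ∀ v ∈ p, Reach A a v := by
  intro p
  induction p with
  | nil => intro _ a ha; simp at ha
  | cons b t ih =>
    intro hp a ha v hv
    have hab : a = b := by simpa using ha.symm
    subst hab
    rcases List.mem_cons.mp hv with rfl | hv
    · exact Relation.ReflTransGen.refl
    · cases t with
      | nil => simp at hv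
      | cons c t' =>
        have h := List.isChain_cons_cons.mp hp
        exact Relation.ReflTransGen.head h.1 (ih h.2 c rfl v hv)

lemma chain'_reach_last :
    ∀ (p : List V), p.Chain' A → ∀ (a : V), p.getLast? = some a → ∀ v ∈ p, Reach A v a := by
  intro p
  induction p with
  | nil => intro _ a ha; simp at ha
  | cons b t ih =>
    intro hp a ha v hv
    cases t with
    | nil =>
      simp at ha hv
      subst ha; subst hv
      exact Relation.ReflTransGen.refl
    | cons c t' =>
      have ha' : (c :: t').getLast? = some a := by
        rwa [List.getLast?_cons_cons] at ha
      have hch := List.isChain_cons_cons.mp hp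
      rcases List.mem_cons.mp hv with rfl | hv
      · have hmem : a ∈ c :: t' := by
          obtain ⟨hne, rfl⟩ := List.mem_getLast?_eq_getLast (Option.mem_def.mpr ha')
          exact List.getLast_mem hne
        exact Relation.ReflTransGen.head hch.1 (chain'_head_reach _ hch.2 c rfl a hmem)
      · exact ih hch.2 a ha' v hv

lemma insert_chain (hsc : Semicomplete A) (v : V) :
    ∀ (p : List V), p.Chain' A → v ∉ p →
    ∃ q : List V, q.Perm (v :: p) ∧ q.Chain' A ∧ (q.head? = some v ∨ q.head? = p.head?) := by
  intro p
  induction p with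
  | nil => exact fun _ _ => ⟨[v], List.Perm.refl _, List.isChain_singleton v, Or.inl rfl⟩
  | cons a t ih =>
    intro hp hv
    have hva : v ≠ a := fun h => hv (by simp [h])
    rcases hsc v a hva with h | h
    · exact ⟨v :: a :: t, List.Perm.refl _, List.isChain_cons_cons.mpr ⟨h, hp⟩, Or.inl rfl⟩
    · obtain ⟨q, hqp, hqc, hqh⟩ := ih hp.tail (fun hm => hv (List.mem_cons_of_mem a hm))
      refine ⟨a :: q, ?_, ?_, Or.inr rfl⟩
      · exact (hqp.cons a).trans (List.Perm.swap v a t)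
      · refine List.isChain_cons.mpr ⟨?_, hqc⟩
        intro h' hh'
        rcases hqh with hq1 | hq2
        · rw [hq1] at hh'
          obtain rfl : h' = v := by simpa using hh'.symm
          exact h
        · cases t with
          | nil =>
            rw [hq2] at hh'; simp at hh'
          | cons c t' =>
            rw [hq2] at hh'
            obtain rfl : h' = c := by simpa using hh'.symm
            exact (List.isChain_cons_cons.mp hp).1

lemma exists_chain_perm (hsc : Semicomplete A) :
    ∀ (l : List V), l.Nodup → ∃ q : List V, q.Perm l ∧ q.Chain' A := by
  intro l
  induction l with
  | nil => exact fun _ => ⟨[], List.Perm.refl _, List.isChain_nil⟩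
  | cons a t ih =>
    intro hnd
    obtain ⟨q, hq, hqc⟩ := ih (List.nodup_cons.mp hnd).2
    have hav : a ∉ q := fun h => (List.nodup_cons.mp hnd).1 (hq.mem_iff.mp h)
    obtain ⟨q', hq', hq'c, _⟩ := insert_chain hsc a q hqc hav
    exact ⟨q', hq'.trans (hq.cons a), hq'c⟩

lemma exists_ham [Fintype V] (hsc : Semicomplete A) :
    ∃ q : List V, q.Chain' A ∧ q.Nodup ∧ ∀ v : V, v ∈ q := by
  obtain ⟨q, hq, hqc⟩ := exists_chain_perm hsc Finset.univ.toList (Finset.nodup_toList _)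
  exact ⟨q, hqc, hq.symm.nodup (Finset.nodup_toList _),
    fun v => hq.mem_iff.mpr (by simp)⟩

/-- lift a path whose arcs all have targets satisfying `P` to the subtype. -/
lemma lift_subtype_tgt {P : V → Prop} {R : V → V → Prop} (hR : ∀ s t, R s t → A s t ∧ P t)
    {u v : V} (h : Relation.ReflTransGen R u v) (hu : P u) (hv : P v) :
    Relation.ReflTransGen (fun a b : Subtype P => A a.1 b.1) ⟨u, hu⟩ ⟨v, hv⟩ := by
  revert hu
  induction h using Relation.ReflTransGen.head_induction_on with
  | refl => intro hu; exact Relation.ReflTransGen.refl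
  | head h1 h2 ih =>
    intro hu
    obtain ⟨hA, hPc⟩ := hR _ _ h1
    exact Relation.ReflTransGen.head hA (ih hPc)

/-- lift a path whose arcs all have sources satisfying `P` to the subtype. -/
lemma lift_subtype_src {P : V → Prop} {R : V → V → Prop} (hR : ∀ s t, R s t → A s t ∧ P s)
    {u v : V} (h : Relation.ReflTransGen R u v) (hu : P u) (hv : P v) :
    Relation.ReflTransGen (fun a b : Subtype P => A a.1 b.1) ⟨u, hu⟩ ⟨v, hv⟩ := by
  revert hv
  induction h with
  | refl => intro hv; exact Relation.ReflTransGen.refl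
  | tail h1 h2 ih =>
    intro hv
    obtain ⟨hA, hPc⟩ := hR _ _ h2
    exact Relation.ReflTransGen.tail (ih hPc) hA

lemma first_arc {x v : V} (h : Reach A x v) (hv : v ≠ x) :
    ∃ z : V, ∃ hz : z ≠ x, A x z ∧
      Relation.ReflTransGen (fun a b : {w : V // w ≠ x} => A a.1 b.1) ⟨z, hz⟩ ⟨v, hv⟩ := by
  have key : ∀ {w : V}, Relation.ReflTransGen A x w → w ≠ x →
      Relation.ReflTransGen (fun s t => A s t ∧ t ≠ x) x w := by
    intro w h
    induction h with
    | refl => exact fun hw => absurd rfl hw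
    | @tail c w hs hA ih =>
      intro hw
      by_cases hc : c = x
      · subst hc; exact Relation.ReflTransGen.single ⟨hA, hw⟩
      · exact Relation.ReflTransGen.tail (ih hc) ⟨hA, hw⟩
  have h2 := key h hv
  rcases h2.cases_head with heq | ⟨z, ⟨hxz, hzx⟩, hrest⟩
  · exact absurd heq.symm hv
  · exact ⟨z, hzx, hxz, lift_subtype_tgt (fun s t h => ⟨h.1, h.2⟩) hrest hzx hv⟩

lemma last_arc {u y : V} (h : Reach A u y) (hu : u ≠ y) :
    ∃ z : V, ∃ hz : z ≠ y, A z y ∧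
      Relation.ReflTransGen (fun a b : {w : V // w ≠ y} => A a.1 b.1) ⟨u, hu⟩ ⟨z, hz⟩ := by
  have key : ∀ {w : V}, Relation.ReflTransGen A w y → w ≠ y →
      Relation.ReflTransGen (fun s t => A s t ∧ s ≠ y) w y := by
    intro w h
    induction h using Relation.ReflTransGen.head_induction_on with
    | refl => exact fun hw => absurd rfl hw
    | @head a c h1 h2 ih =>
      intro ha
      by_cases hc : c = y
      · subst hc; exact Relation.ReflTransGen.single ⟨h1, ha⟩
      · exact Relation.ReflTransGen.head ⟨h1, ha⟩ (ih hc)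
  have h2 := key h hu
  rcases h2.cases_tail with heq | ⟨z, hrest, hA, hzy⟩
  · exact absurd heq hu.symm
  · exact ⟨z, hzy, hA, lift_subtype_src (fun s t h => ⟨h.1, h.2⟩) hrest hu hzy⟩

lemma avoid_inSet {u v : V} (h : Reach A u v) (hv : v ∉ InSet A) :
    Relation.ReflTransGen (fun s t => A s t ∧ t ∉ InSet A) u v := by
  revert hv
  induction h with
  | refl => intro _; exact Relation.ReflTransGen.refl
  | @tail c w hs hA ih =>
    intro hw
    have hc : c ∉ InSet A := fun h => hw (mem_inSet_of_reach h (Relation.ReflTransGen.single hA))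
    exact Relation.ReflTransGen.tail (ih hc) ⟨hA, hw⟩

end Aux

section Main

variable {A : V → V → Prop}

/-- prepend `x` to a Hamiltonian list of `V \ {x}` starting at an out-neighbour of `x`. -/
lemma assemble_cons {x : V} (q' : List {v : V // v ≠ x}) {z : V} {hz : z ≠ x}
    (h1 : q'.head? = some ⟨z, hz⟩) (h2 : q'.Nodup)
    (h3 : q'.Chain' (fun a b => A a.1 b.1)) (h4 : ∀ v, v ∈ q') (hxz : A x z) :
    ∃ p : List V, p.head? = some x ∧ p.Nodup ∧ p.Chain' A ∧ ∀ v, v ∈ p := by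
  refine ⟨x :: q'.map Subtype.val, rfl, ?_, ?_, ?_⟩
  · refine List.nodup_cons.mpr ⟨?_, h2.map Subtype.val_injective⟩
    intro hmem
    obtain ⟨a, _, ha2⟩ := List.mem_map.mp hmem
    exact a.2 ha2
  · refine List.isChain_cons.mpr ⟨?_, (List.isChain_map _).mpr h3⟩
    intro h hh
    rw [List.head?_map, h1] at hh
    obtain rfl : h = z := by simpa using hh.symm
    exact hxz
  · intro v
    by_cases hvx : v = x
    · subst hvx; exact List.mem_cons_self
    · have : (⟨v, hvx⟩ : {w : V // w ≠ x}) ∈ q' := h4 _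
      exact List.mem_cons_of_mem _ (List.mem_map.mpr ⟨⟨v, hvx⟩, this, rfl⟩)

/-- append `y` to a Hamiltonian list of `V \ {y}` ending at an in-neighbour of `y`. -/
lemma assemble_append {y : V} (q' : List {v : V // v ≠ y}) {x l : {v : V // v ≠ y}}
    (h1 : q'.head? = some x) (hl : q'.getLast? = some l) (h2 : q'.Nodup)
    (h3 : q'.Chain' (fun a b => A a.1 b.1)) (h4 : ∀ v, v ∈ q') (hly : A l.1 y) :
    ∃ p : List V, p.head? = some x.1 ∧ p.getLast? = some y ∧ p.Nodup ∧ p.Chain' A ∧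
      ∀ v, v ∈ p := by
  have hne : q'.map Subtype.val ≠ [] := by
    intro h
    rw [List.map_eq_nil_iff] at h
    rw [h] at h1; simp at h1
  refine ⟨q'.map Subtype.val ++ [y], ?_, List.getLast?_concat, ?_, ?_, ?_⟩
  · rw [List.head?_append_of_ne_nil _ hne, List.head?_map, h1]; rfl
  · rw [List.nodup_append]
    refine ⟨h2.map Subtype.val_injective, List.nodup_singleton y, ?_⟩
    intro a ha b' hb hab
    obtain ⟨b, _, rfl⟩ := List.mem_map.mp ha
    exact b.2 (by simp at hb; rw [hab, hb])
  · refine List.isChain_append.mpr ⟨(List.isChain_map _).mpr h3, List.isChain_singleton y, ?_⟩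
    intro a ha b hb
    rw [List.getLast?_map, hl] at ha
    obtain rfl : a = l.1 := by simpa using ha.symm
    obtain rfl : b = y := by simpa using hb.symm
    exact hly
  · intro v
    by_cases hvy : v = y
    · exact List.mem_append.mpr (Or.inr (by simp [hvy]))
    · have : (⟨v, hvy⟩ : {w : V // w ≠ y}) ∈ q' := h4 _
      exact List.mem_append.mpr (Or.inl (List.mem_map.mpr ⟨⟨v, hvy⟩, this, rfl⟩))

lemma key_lemma : ∀ (n : ℕ) (V : Type u) [Fintype V] (A : V → V → Prop),
    Fintype.card V ≤ n → Semicomplete A →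
    ((Strong A → ∀ x : V, ∃ p : List V, p.head? = some x ∧ p.Nodup ∧ p.Chain' A ∧
        ∀ v, v ∈ p) ∧
     (∀ x y : V, x ∈ OutSet A → y ∈ InSet A → ¬ Strong A →
        ∃ p : List V, p.head? = some x ∧ p.getLast? = some y ∧ p.Nodup ∧ p.Chain' A ∧
          ∀ v, v ∈ p)) := by
  intro n
  induction n with
  | zero =>
    intro V _ A hcard _
    have : IsEmpty V := Fintype.card_eq_zero_iff.mp (Nat.le_zero.mp hcard)
    exact ⟨fun _ x => isEmptyElim x, fun x => isEmptyElim x⟩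
  | succ n ih =>
    intro V _ A hcard hsc
    classical
    constructor
    · -- strong part: Hamiltonian path starting anywhere
      intro hst x
      by_cases hall : ∀ v : V, v = x
      · exact ⟨[x], rfl, List.nodup_singleton x, List.isChain_singleton x,
          fun v => by rw [hall v]; exact List.mem_singleton_self x⟩
      · push_neg at hall
        obtain ⟨w, hw⟩ := hall
        have hsc' : Semicomplete (fun a b : {v : V // v ≠ x} => A a.1 b.1) :=
          fun a b hne => hsc a.1 b.1 (fun h => hne (Subtype.ext h))
        have hne' : Nonempty {v : V // v ≠ x} := ⟨⟨w, hw⟩⟩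
        obtain ⟨q, hqc, hqnd, hqall⟩ := exists_ham hsc'
        have hqne : q ≠ [] := by
          intro h
          obtain ⟨a⟩ := hne'
          have := hqall a
          rw [h] at this; simp at this
        obtain ⟨o, ho⟩ : ∃ o, q.head? = some o := by
          cases q with
          | nil => exact absurd rfl hqne
          | cons a t => exact ⟨a, rfl⟩
        have hoOut : o ∈ OutSet (fun a b : {v : V // v ≠ x} => A a.1 b.1) :=
          fun v => chain'_head_reach q hqc o ho v (hqall v)
        obtain ⟨o, ho2⟩ := o
        obtain ⟨z, hz, hxz, hreach⟩ := first_arc (A := A) (hst x o) ho2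
        have hzOut : (⟨z, hz⟩ : {v : V // v ≠ x}) ∈
            OutSet (fun a b : {v : V // v ≠ x} => A a.1 b.1) :=
          mem_outSet_of_reach hoOut hreach
        have hcard' : Fintype.card {v : V // v ≠ x} ≤ n := by
          have hlt : Fintype.card {v : V // v ≠ x} < Fintype.card V :=
            Fintype.card_subtype_lt (p := fun v : V => v ≠ x) (x := x) (by simp)
          omega
        obtain ⟨P1, P2⟩ := ih {v : V // v ≠ x} (fun a b => A a.1 b.1) hcard' hsc'
        by_cases hst' : Strong (fun a b : {v : V // v ≠ x} => A a.1 b.1)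
        · obtain ⟨q', h1, h2, h3, h4⟩ := P1 hst' ⟨z, hz⟩
          exact assemble_cons q' h1 h2 h3 h4 hxz
        · obtain ⟨e, he⟩ : ∃ e, q.getLast? = some e := by
            cases q with
            | nil => exact absurd rfl hqne
            | cons a t => exact ⟨(a :: t).getLast (by simp), List.getLast?_eq_getLast_of_ne_nil _⟩
          have heIn : e ∈ InSet (fun a b : {v : V // v ≠ x} => A a.1 b.1) :=
            fun v => chain'_reach_last q hqc e he v (hqall v)
          obtain ⟨q', h1, _, h2, h3, h4⟩ := P2 ⟨z, hz⟩ e hzOut heIn hst'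
          exact assemble_cons q' h1 h2 h3 h4 hxz
    · -- non-strong part
      intro x y hx hy hns
      have hxy : x ≠ y := by
        rintro rfl
        exact hns (strong_of_out_in hx hy)
      have hxIn : x ∉ InSet A := fun h => hns (strong_of_out_in hx h)
      have hsc' : Semicomplete (fun a b : {v : V // v ≠ y} => A a.1 b.1) :=
        fun a b hne => hsc a.1 b.1 (fun h => hne (Subtype.ext h))
      have hcard' : Fintype.card {v : V // v ≠ y} ≤ n := by
        have hlt : Fintype.card {v : V // v ≠ y} < Fintype.card V :=
          Fintype.card_subtype_lt (p := fun v : V => v ≠ y) (x := y) (by simp)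
        omega
      obtain ⟨P1, P2⟩ := ih {v : V // v ≠ y} (fun a b => A a.1 b.1) hcard' hsc'
      have hx' : (⟨x, hxy⟩ : {v : V // v ≠ y}) ∈
          OutSet (fun a b : {v : V // v ≠ y} => A a.1 b.1) := by
        rintro ⟨v, hv⟩
        by_cases hvIn : v ∈ InSet A
        · exact Relation.ReflTransGen.single (arc_into_inSet hsc hxIn hvIn)
        · exact lift_subtype_tgt (P := fun w : V => w ≠ y)
            (fun s t h => ⟨h.1, fun hty => h.2 (by rw [hty]; exact hy)⟩)
            (avoid_inSet (hx v) hvIn) hxy hv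
      by_cases hst' : Strong (fun a b : {v : V // v ≠ y} => A a.1 b.1)
      · -- InSet A = {y}
        have hIn : ∀ v : V, v ∈ InSet A → v = y := by
          intro v hvIn
          by_contra hvy
          have hreach : Reach A v x := by
            have := hst' ⟨v, hvy⟩ ⟨x, hxy⟩
            exact Relation.ReflTransGen.lift Subtype.val (fun a b h => h) _ _ this
          exact hns (strong_of_out_in (mem_outSet_of_reach hx hreach) hvIn)
        obtain ⟨q', h1, h2, h3, h4⟩ := P1 hst' ⟨x, hxy⟩
        have hqne : q' ≠ [] := by intro h; rw [h] at h1; simp at h1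
        obtain ⟨l, hl⟩ : ∃ l, q'.getLast? = some l :=
          ⟨q'.getLast hqne, List.getLast?_eq_getLast_of_ne_nil _⟩
        have hly : A l.1 y := arc_into_inSet hsc (fun h => l.2 (hIn l.1 h)) hy
        exact assemble_append q' h1 hl h2 h3 h4 hly
      · have hne' : Nonempty {v : V // v ≠ y} := ⟨⟨x, hxy⟩⟩
        obtain ⟨q, hqc, hqnd, hqall⟩ := exists_ham hsc'
        have hqne : q ≠ [] := by
          intro h
          obtain ⟨a⟩ := hne'
          have := hqall a
          rw [h] at this; simp at this
        obtain ⟨e, he⟩ : ∃ e, q.getLast? = some e :=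
          ⟨q.getLast hqne, List.getLast?_eq_getLast_of_ne_nil _⟩
        have heIn : e ∈ InSet (fun a b : {v : V // v ≠ y} => A a.1 b.1) :=
          fun v => chain'_reach_last q hqc e he v (hqall v)
        obtain ⟨e, he2⟩ := e
        obtain ⟨z, hz, hzy, hreach⟩ := last_arc (A := A) (hy e) he2
        have hzIn : (⟨z, hz⟩ : {v : V // v ≠ y}) ∈
            InSet (fun a b : {v : V // v ≠ y} => A a.1 b.1) :=
          mem_inSet_of_reach heIn hreach
        obtain ⟨q', h1, hl, h2, h3, h4⟩ := P2 ⟨x, hxy⟩ ⟨z, hz⟩ hx' hzIn hst'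
        exact assemble_append q' h1 hl h2 h3 h4 hzy
      
end Main

/-- A non-strong semicomplete digraph has an `(x,y)`-Hamiltonian path for every
`x` in the initial strong component (= `Out(D)`) and `y` in the terminal strong
component (= `In(D)`). -/
theorem stmt4 [Fintype V] (A : V → V → Prop) (hsc : Semicomplete A)
    (hirr : Irreflexive A) (hns : ¬ Strong A)
    (x y : V) (hx : x ∈ OutSet A) (hy : y ∈ InSet A) :
    ∃ p : List V, IsPathOn A x y p ∧ ∀ v : V, v ∈ p := by
  obtain ⟨-, P2⟩ := key_lemma (Fintype.card V) V A le_rfl hsc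
  obtain ⟨p, h1, h2, h3, h4, h5⟩ := P2 x y hx hy hns
  refine ⟨p, ⟨?_, h1, h2, h3, h4⟩, h5⟩
  rintro rfl
  simp at h1
end

section
/- Let D be a semicomplete digraph with a partition V_1,...,V_{2α+2} of V(D) for some α ≥ 1, with v ∈ V_2, w ∈ V_{2α+1}, u ∈ V_{2α+2}, such that all arcs between V_i and V_j with i < j go from V_i to V_j except that for each i ∈ [2α] there is exactly one arc from V_{i+2} to V_i (going from the terminal strong component of D⟨V_{i+2}⟩ to the initial strong component of D⟨V_i⟩). Then for every vertex z ∈ V_1, D has no pair of arc-disjoint (u,z)- and (w,v)-paths. -/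
variable {V : Type*}

lemma arcs_rel {A : V → V → Prop} :
    ∀ (p : List V), p.Chain' A → ∀ a b : V, (a, b) ∈ pathArcs p → A a b := by
  intro p
  induction p with
  | nil => intro _ a b h; simp [pathArcs] at h
  | cons c rest ih =>
    intro hch a b hm
    cases rest with
    | nil => simp [pathArcs] at hm
    | cons d r =>
      have hrw : pathArcs (c :: d :: r) = (c, d) :: pathArcs (d :: r) := rfl
      rw [hrw] at hm
      rcases List.mem_cons.mp hm with h | h
      · obtain ⟨h1, h2⟩ := Prod.mk.injEq a b c d ▸ h
        subst h1; subst h2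
        exact (List.isChain_cons_cons.mp hch).1
      · exact ih (List.isChain_cons_cons.mp hch).2 a b h

lemma crossing {A : V → V → Prop} (f : V → ℕ) :
    ∀ (p : List V) (x y : V), p.Chain' A → p.head? = some x → p.getLast? = some y →
    ∀ t : ℕ, f y ≤ t → t < f x →
    ∃ a b : V, (a, b) ∈ pathArcs p ∧ f b ≤ t ∧ t < f a := by
  intro p
  induction p with
  | nil => intro x y _ h; simp at h
  | cons c rest ih =>
    intro x y hch hh hl t hy hx
    have hxc : x = c := by simp at hh; exact hh.symm
    subst hxc
    cases rest with
    | nil =>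
      have hyc : y = x := by simp at hl; exact hl.symm
      subst hyc
      omega
    | cons d r =>
      have hrw : pathArcs (x :: d :: r) = (x, d) :: pathArcs (d :: r) := rfl
      by_cases hd : f d ≤ t
      · refine ⟨x, d, ?_, hd, hx⟩
        rw [hrw]; exact List.mem_cons_self
      · have hl' : (d :: r).getLast? = some y := by
          rw [← hl]; exact (List.getLast?_cons_cons).symm
        obtain ⟨a, b, hm, h1, h2⟩ := ih d y (List.isChain_cons_cons.mp hch).2 rfl hl' t hy (by omega)
        refine ⟨a, b, ?_, h1, h2⟩
        rw [hrw]; exact List.mem_cons_of_mem _ hm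

/-- Type `2α+2` obstruction (0-based indexing: `P i` is `V_{i+1}` of the paper).
No arc-disjoint `(u,z)`- and `(w,v)`-paths exist for any `z ∈ V₁`. -/
theorem stmt9 (A : V → V → Prop) (hsc : Semicomplete A) (α : ℕ) (hα : 1 ≤ α)
    (P : Fin (2 * α + 2) → Set V) (u w v : V)
    (hpart : ∀ x : V, ∃! i, x ∈ P i)
    (hv : v ∈ P ⟨1, by omega⟩) (hw : w ∈ P ⟨2 * α, by omega⟩)
    (hu : u ∈ P ⟨2 * α + 1, by omega⟩)
    (hback : ∀ i j : Fin (2 * α + 2), i < j → ∀ x ∈ P j, ∀ y ∈ P i, A x y →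
      (j : ℕ) = (i : ℕ) + 2)
    (huniq : ∀ i : ℕ, (h2 : i + 2 < 2 * α + 2) → ∃! e : V × V,
      e.1 ∈ P ⟨i + 2, h2⟩ ∧ e.2 ∈ P ⟨i, by omega⟩ ∧ A e.1 e.2)
    (hends : ∀ i : ℕ, (h2 : i + 2 < 2 * α + 2) → ∀ x y : V,
      x ∈ P ⟨i + 2, h2⟩ → y ∈ P ⟨i, by omega⟩ → A x y →
      (∀ a ∈ P ⟨i + 2, h2⟩, ReachOn A (P ⟨i + 2, h2⟩) a x) ∧
      (∀ a ∈ P ⟨i, by omega⟩, ReachOn A (P ⟨i, by omega⟩) y a)) :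
    ∀ z ∈ P ⟨0, by omega⟩, ¬ ArcDisjointPaths A u z w v := by
  intro z hz hcon
  obtain ⟨p, q, hp, hq, hdisj⟩ := hcon
  choose lvl hlvl using hpart
  have hlv1 : ∀ x : V, x ∈ P (lvl x) := fun x => (hlvl x).1
  have hlv2 : ∀ (x : V) (i : Fin (2 * α + 2)), x ∈ P i → i = lvl x :=
    fun x i h => (hlvl x).2 i h
  choose e he using huniq
  set f : V → ℕ := fun x => ((lvl x : Fin (2 * α + 2)) : ℕ) with hf
  have hfu : f u = 2 * α + 1 := by
    have h := hlv2 u ⟨2 * α + 1, by omega⟩ hu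
    simp only [hf]; rw [← h]
  have hfz : f z = 0 := by
    have h := hlv2 z ⟨0, by omega⟩ hz
    simp only [hf]; rw [← h]
  have hfv : f v = 1 := by
    have h := hlv2 v ⟨1, by omega⟩ hv
    simp only [hf]; rw [← h]
  have hfw : f w = 2 * α := by
    have h := hlv2 w ⟨2 * α, by omega⟩ hw
    simp only [hf]; rw [← h]
  -- key crossing lemma: a path crossing threshold t uses back arc e s with s = t or s+1 = t
  have key : ∀ (pp : List V) (x y : V), IsPathOn A x y pp → ∀ t : ℕ, f y ≤ t → t < f x →
      ∃ s : ℕ, (s = t ∨ s + 1 = t) ∧ ∃ h : s + 2 < 2 * α + 2, e s h ∈ pathArcs pp := by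
    intro pp x y hpp t hy hx
    obtain ⟨a, b, hab, hbt, hat⟩ :=
      crossing f pp x y hpp.2.2.2.2 hpp.2.1 hpp.2.2.1 t hy hx
    have hA : A a b := arcs_rel pp hpp.2.2.2.2 a b hab
    have hltn : ((lvl b : Fin (2 * α + 2)) : ℕ) < ((lvl a : Fin (2 * α + 2)) : ℕ) := by
      simp only [hf] at hbt hat; omega
    have hlt : lvl b < lvl a := hltn
    have hb2 := hback (lvl b) (lvl a) hlt a (hlv1 a) b (hlv1 b) hA
    have h2 : ((lvl b : Fin (2 * α + 2)) : ℕ) + 2 < 2 * α + 2 := by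
      have := (lvl a).isLt; omega
    refine ⟨((lvl b : Fin (2 * α + 2)) : ℕ), by simp only [hf] at hbt hat; omega, h2, ?_⟩
    have heq : (a, b) = e ((lvl b : Fin (2 * α + 2)) : ℕ) h2 := by
      apply (he _ h2).2
      refine ⟨?_, ?_, hA⟩
      · have hfa : (⟨((lvl b : Fin (2 * α + 2)) : ℕ) + 2, h2⟩ : Fin (2 * α + 2)) = lvl a :=
          Fin.ext hb2.symm
        rw [hfa]; exact hlv1 a
      · have hfb : (⟨((lvl b : Fin (2 * α + 2)) : ℕ), by omega⟩ : Fin (2 * α + 2)) = lvl b :=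
          Fin.ext rfl
        rw [hfb]; exact hlv1 b
    rw [← heq]; exact hab
  -- e (2α-1) is on p (crossing threshold 2α)
  have hS2 : ∃ h : (2 * α - 1) + 2 < 2 * α + 2, e (2 * α - 1) h ∈ pathArcs p := by
    obtain ⟨s, hs, h, hmem⟩ := key p u z hp (2 * α) (by omega) (by omega)
    have hse : s = 2 * α - 1 := by omega
    subst hse; exact ⟨h, hmem⟩
  -- alternation
  have main : ∀ t : ℕ, t < 2 * α →
      (t % 2 = 0 → ∃ h : t + 2 < 2 * α + 2, e t h ∈ pathArcs p) ∧
      (t % 2 = 1 → ∃ h : t + 2 < 2 * α + 2, e t h ∈ pathArcs q) := by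
    intro t
    induction t with
    | zero =>
      intro _
      refine ⟨fun _ => ?_, fun h => by omega⟩
      obtain ⟨s, hs, h, hmem⟩ := key p u z hp 0 (by omega) (by omega)
      have hs0 : s = 0 := by omega
      subst hs0; exact ⟨h, hmem⟩
    | succ t ih =>
      intro ht
      have iht := ih (by omega)
      by_cases hpar : t % 2 = 0
      · refine ⟨fun h => by omega, fun _ => ?_⟩
        obtain ⟨h0, hm0⟩ := iht.1 hpar
        obtain ⟨s, hs, h, hmem⟩ := key q w v hq (t + 1) (by omega) (by omega)
        rcases hs with hs | hs
        · subst hs; exact ⟨h, hmem⟩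
        · have hst : s = t := by omega
          subst hst
          exact absurd hmem (hdisj _ hm0)
      · refine ⟨fun _ => ?_, fun h => by omega⟩
        obtain ⟨h0, hm0⟩ := iht.2 (by omega)
        obtain ⟨s, hs, h, hmem⟩ := key p u z hp (t + 1) (by omega) (by omega)
        rcases hs with hs | hs
        · subst hs; exact ⟨h, hmem⟩
        · have hst : s = t := by omega
          subst hst
          exact absurd hm0 (hdisj _ hmem)
  obtain ⟨hq1, hmq⟩ := (main (2 * α - 1) (by omega)).2 (by omega)
  obtain ⟨hp1, hmp⟩ := hS2
  exact hdisj _ hmp hmq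
end

section
/- Let D be a semicomplete digraph and x, y, z three distinct vertices such that D contains an (x,y)-path and a (y,z)-path. Then D contains arc-disjoint (x,y)- and (y,z)-paths if and only if for every arc e of D, the digraph D − e contains an (x,y)-path or a (y,z)-path. -/
variable {V : Type*}

lemma pathArcs_cons_cons (u v : V) (l : List V) :
    pathArcs (u :: v :: l) = (u, v) :: pathArcs (v :: l) := rfl

lemma mem_pathArcs_iff {u v : V} : ∀ {p : List V},
    (u, v) ∈ pathArcs p ↔ ∃ l1 l2, p = l1 ++ u :: v :: l2 := by
  intro p
  induction p with
  | nil =>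
    simp only [pathArcs, List.zip_nil_left, List.not_mem_nil, false_iff]
    rintro ⟨l1, l2, h⟩
    exact absurd h (by simp)
  | cons a r ih =>
    cases r with
    | nil =>
      simp only [pathArcs, List.tail_cons, List.zip_nil_right, List.not_mem_nil, false_iff]
      rintro ⟨l1, l2, h⟩
      rcases l1 with _ | ⟨a', l1⟩ <;> simp_all
    | cons b l =>
      rw [pathArcs_cons_cons, List.mem_cons, ih]
      constructor
      · rintro (h | ⟨l1, l2, h⟩)
        · exact ⟨[], l, by simp [Prod.ext_iff] at h; simp [h.1, h.2]⟩
        · exact ⟨a :: l1, l2, by simp [h]⟩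
      · rintro ⟨l1, l2, h⟩
        rcases l1 with _ | ⟨a', l1⟩
        · left
          simp at h
          simp [h.1, h.2.1]
        · right
          simp at h
          exact ⟨l1, l2, h.2⟩

lemma mem_of_pathArcs {u v : V} {p : List V} (h : (u, v) ∈ pathArcs p) :
    u ∈ p ∧ v ∈ p := by
  obtain ⟨l1, l2, rfl⟩ := mem_pathArcs_iff.mp h
  simp

lemma rel_of_pathArcs {R : V → V → Prop} {u v : V} {p : List V}
    (hc : p.Chain' R) (h : (u, v) ∈ pathArcs p) : R u v := by
  obtain ⟨l1, l2, rfl⟩ := mem_pathArcs_iff.mp h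
  exact (List.isChain_cons_cons.mp (List.isChain_append.mp hc).2.1).1

lemma chain'_del {A : V → V → Prop} {e : V × V} : ∀ {p : List V},
    p.Chain' A → (∀ uv ∈ pathArcs p, uv ≠ e) → p.Chain' (Del A e) := by
  intro p
  induction p with
  | nil => intro _ _; exact List.isChain_nil
  | cons a r ih =>
    cases r with
    | nil => intro _ _; exact List.isChain_singleton _
    | cons b l =>
      intro hc hne
      rw [List.Chain', List.isChain_cons_cons] at hc ⊢
      refine ⟨⟨hc.1, hne (a, b) (by rw [pathArcs_cons_cons]; exact List.mem_cons_self)⟩, ?_⟩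
      exact ih hc.2 (fun uv huv => hne uv (by rw [pathArcs_cons_cons]; exact List.mem_cons_of_mem _ huv))

lemma not_pathArcs_into_head {u y : V} {p : List V} (hnd : p.Nodup)
    (hh : p.head? = some y) : (u, y) ∉ pathArcs p := by
  intro h
  obtain ⟨l1, l2, rfl⟩ := mem_pathArcs_iff.mp h
  rcases l1 with _ | ⟨a, l1⟩
  · simp at hh
    subst hh
    simp at hnd
  · simp at hh
    subst hh
    exact (List.nodup_append'.mp hnd).2.2 (List.mem_cons_self) (by simp)

lemma not_pathArcs_from_last {w v : V} {p : List V} (hnd : p.Nodup)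
    (hl : p.getLast? = some w) : (w, v) ∉ pathArcs p := by
  intro h
  obtain ⟨l1, l2, rfl⟩ := mem_pathArcs_iff.mp h
  rw [List.getLast?_append_cons] at hl
  have h2 : (w :: v :: l2).getLast? = (v :: l2).getLast? :=
    List.getLast?_append_cons [w] v l2
  rw [h2] at hl
  have hmem : w ∈ v :: l2 := by
    obtain ⟨hne, heq⟩ := List.mem_getLast?_eq_getLast (l := v :: l2) (x := w) hl
    rw [heq]
    exact List.getLast_mem _
  have hnd2 : (w :: v :: l2).Nodup := (List.nodup_append.mp hnd).2.1
  exact (List.nodup_cons.mp hnd2).1 hmem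

lemma pathArcs_succ_unique {u v v' : V} : ∀ {p : List V}, p.Nodup →
    (u, v) ∈ pathArcs p → (u, v') ∈ pathArcs p → v = v' := by
  intro p
  induction p with
  | nil => intro _ h; simp [pathArcs] at h
  | cons a r ih =>
    cases r with
    | nil => intro _ h; simp [pathArcs] at h
    | cons b l =>
      intro hnd h h'
      rw [pathArcs_cons_cons, List.mem_cons] at h h'
      rcases h with h | h <;> rcases h' with h' | h'
      · rw [Prod.ext_iff] at h h'
        simp at h h'
        rw [h.2, h'.2]
      · exfalso
        rw [Prod.ext_iff] at h; simp at h
        have := (mem_of_pathArcs h').1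
        exact (List.nodup_cons.mp hnd).1 (by rw [← h.1]; exact this)
      · exfalso
        rw [Prod.ext_iff] at h'; simp at h'
        have := (mem_of_pathArcs h).1
        exact (List.nodup_cons.mp hnd).1 (by rw [← h'.1]; exact this)
      · exact ih (List.nodup_cons.mp hnd).2 h h'

lemma exists_path_of_reflTransGen {R : V → V → Prop} {s w : V}
    (h : Relation.ReflTransGen R s w) :
    ∃ p, IsPathOn R s w p ∧ ∀ v ∈ p, Relation.ReflTransGen R s v := by
  induction h with
  | refl =>
    exact ⟨[s], ⟨by simp, by simp, by simp, by simp, List.isChain_singleton _⟩,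
      by intro v hv; simp at hv; rw [hv]⟩
  | @tail b c hab hbc ih =>
    obtain ⟨p, ⟨hpne, hph, hpl, hpnd, hpc⟩, hmem⟩ := ih
    by_cases hc : c ∈ p
    · obtain ⟨l1, l2, rfl⟩ := List.append_of_mem hc
      refine ⟨l1 ++ [c], ⟨by simp, ?_, by simp, ?_, ?_⟩, ?_⟩
      · rcases l1 with _ | ⟨a, l1⟩ <;> simp_all
      · exact hpnd.sublist (List.Sublist.append_left
          (List.cons_sublist_cons.mpr (List.nil_sublist _)) l1)
      · have : l1 ++ c :: l2 = (l1 ++ [c]) ++ l2 := by simp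
        rw [this] at hpc
        exact (List.isChain_append.mp hpc).1
      · intro v hv
        apply hmem
        rcases List.mem_append.mp hv with h | h
        · exact List.mem_append.mpr (Or.inl h)
        · simp at h; rw [h]; exact hc
    · refine ⟨p ++ [c], ⟨by simp, ?_, by simp, ?_, ?_⟩, ?_⟩
      · rcases p with _ | ⟨a, p⟩
        · exact absurd rfl hpne
        · simpa using hph
      · rw [List.nodup_append']
        exact ⟨hpnd, by simp, by intro a ha hb; simp at hb; rw [hb] at ha; exact hc ha⟩
      · rw [List.Chain', List.isChain_append]
        refine ⟨hpc, List.isChain_singleton _, ?_⟩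
        intro a ha d hd
        simp at hd
        rw [hpl] at ha
        simp at ha
        rw [← ha, ← hd]
        exact hbc
      · intro v hv
        rcases List.mem_append.mp hv with h | h
        · exact hmem v h
        · simp at h; rw [h]; exact hab.tail hbc

lemma exists_exit {R : V → V → Prop} (X : Set V) :
    ∀ (p : List V) (s e : V), p.Chain' R → p.head? = some s → p.getLast? = some e →
      s ∈ X → e ∉ X → ∃ u v, (u, v) ∈ pathArcs p ∧ u ∈ X ∧ v ∉ X ∧ R u v := by
  intro p
  induction p with
  | nil => intro s e _ hh; simp at hh
  | cons a r ih =>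
    intro s e hc hh hl hs he
    simp at hh
    subst hh
    cases r with
    | nil =>
      simp at hl
      rw [hl] at hs
      exact absurd hs he
    | cons b l =>
      rw [List.Chain', List.isChain_cons_cons] at hc
      by_cases hb : b ∈ X
      · obtain ⟨u, v, huv, h1, h2, h3⟩ :=
          ih b e hc.2 (by simp) (by rw [← hl]; simp [List.getLast?_cons_cons]) hb he
        exact ⟨u, v, by rw [pathArcs_cons_cons]; exact List.mem_cons_of_mem _ huv, h1, h2, h3⟩
      · exact ⟨a, b, by rw [pathArcs_cons_cons]; exact List.mem_cons_self, hs, hb, hc.1⟩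


/-- Arc-disjoint `(x,y)`- and `(y,z)`-paths exist iff no single arc separates
both pairs. -/
theorem stmt10 (A : V → V → Prop) (hsc : Semicomplete A) (x y z : V)
    (hxy : x ≠ y) (hyz : y ≠ z) (hxz : x ≠ z)
    (h1 : ∃ p : List V, IsPathOn A x y p) (h2 : ∃ p : List V, IsPathOn A y z p) :
    ArcDisjointPaths A x y y z ↔
      ∀ a b : V, A a b →
        ((∃ p : List V, IsPathOn (Del A (a, b)) x y p) ∨
          ∃ p : List V, IsPathOn (Del A (a, b)) y z p) := by
  constructor
  · rintro ⟨p, q, hp, hq, hd⟩ a b _hab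
    obtain ⟨hpne, hph, hpl, hpnd, hpc⟩ := hp
    obtain ⟨hqne, hqh, hql, hqnd, hqc⟩ := hq
    by_cases hpe : (a, b) ∈ pathArcs p
    · exact Or.inr ⟨q, hqne, hqh, hql, hqnd,
        chain'_del hqc (fun uv huv heq => hd uv (heq ▸ hpe) huv)⟩
    · exact Or.inl ⟨p, hpne, hph, hpl, hpnd,
        chain'_del hpc (fun uv huv heq => hpe (heq ▸ huv))⟩
  · intro hC
    by_cases hAyz : A y z
    · obtain ⟨p, hpne, hph, hpl, hpnd, hpc⟩ := h1
      refine ⟨p, [y, z], ⟨hpne, hph, hpl, hpnd, hpc⟩,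
        ⟨by simp, by simp, by simp, by simp [hyz], List.isChain_pair.mpr hAyz⟩, ?_⟩
      intro e he hqe
      have he2 : e = (y, z) := by simpa [pathArcs] using hqe
      rw [he2] at he
      exact not_pathArcs_from_last hpnd hpl he
    · obtain ⟨n, ⟨q, hq, hlen⟩, hminn⟩ := (wellFounded_lt (α := ℕ)).has_min
        {n | ∃ q, IsPathOn A y z q ∧ q.length = n}
        (by obtain ⟨p0, hp0⟩ := h2; exact ⟨p0.length, p0, hp0, rfl⟩)
      have hmin : ∀ p', IsPathOn A y z p' → q.length ≤ p'.length := by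
        intro p' hp'
        by_contra hlt
        push_neg at hlt
        rw [hlen] at hlt
        exact hminn p'.length ⟨p', hp', rfl⟩ hlt
      obtain ⟨hqne, hqh, hql, hqnd, hqc⟩ := hq
      rcases q with _ | ⟨y0, rest⟩
      · exact absurd rfl hqne
      have hy0 : y = y0 := by simpa using hqh.symm
      clear hqh
      subst hy0
      rcases rest with _ | ⟨b, t⟩
      · simp at hql
        exact absurd hql hyz
      rcases t with _ | ⟨c, t2⟩
      · simp at hql hqc
        rw [hql] at hqc
        exact absurd (List.isChain_pair.mp hqc) hAyz
      have hynotin : y ∉ b :: c :: t2 := (List.nodup_cons.mp hqnd).1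
      have hzt : z ∈ c :: t2 := by
        have hsp : (y :: b :: c :: t2).getLast? = (c :: t2).getLast? := by
          rw [show y :: b :: c :: t2 = [y, b] ++ (c :: t2) from rfl]
          exact List.getLast?_append_of_ne_nil _ (by simp)
        rw [hsp] at hql
        obtain ⟨hne', heq'⟩ := List.mem_getLast?_eq_getLast hql
        rw [heq']
        exact List.getLast_mem _
      have hF1 : ∀ w ∈ c :: t2, ¬ A y w := by
        intro w hw hAyw
        obtain ⟨t1, t2', heq⟩ := List.append_of_mem hw
        have hqnd2 : (y :: b :: (t1 ++ w :: t2')).Nodup := by rw [← heq]; exact hqnd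
        have hqc2 : (y :: b :: (t1 ++ w :: t2')).Chain' A := by rw [← heq]; exact hqc
        have hql2 : (y :: b :: (t1 ++ w :: t2')).getLast? = some z := by rw [← heq]; exact hql
        have hsplit : y :: b :: (t1 ++ w :: t2') = (y :: b :: t1) ++ (w :: t2') := by simp
        rw [hsplit] at hqnd2 hqc2 hql2
        rw [List.getLast?_append_of_ne_nil _ (by simp)] at hql2
        have hpath : IsPathOn A y z (y :: w :: t2') := by
          refine ⟨by simp, by simp, ?_, ?_, ?_⟩
          · rw [show y :: w :: t2' = [y] ++ (w :: t2') from rfl,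
              List.getLast?_append_of_ne_nil _ (by simp)]
            exact hql2
          · rw [List.nodup_cons]
            refine ⟨?_, (List.nodup_append'.mp hqnd2).2.1⟩
            intro hy
            exact (List.nodup_append'.mp hqnd2).2.2 (by simp) hy
          · rw [List.Chain', List.isChain_cons_cons]
            exact ⟨hAyw, (List.isChain_append.mp hqc2).2.1⟩
        have hle := hmin _ hpath
        rw [heq] at hle
        simp at hle
        omega
      set Hrel : V → V → Prop :=
        fun u v => A u v ∧ (u, v) ∉ pathArcs (y :: b :: c :: t2) ∧ v ≠ y with hHrel
      set X : Set V := {w | Relation.ReflTransGen Hrel x w} with hXdef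
      have hxX : x ∈ X := Relation.ReflTransGen.refl
      have hyX : y ∉ X := by
        intro hy
        rcases Relation.ReflTransGen.cases_tail hy with h | ⟨u, _, hu⟩
        · exact hxy h.symm
        · exact hu.2.2 rfl
      have hstep : ∀ {u v : V}, u ∈ X → Hrel u v → v ∈ X :=
        fun hu h => Relation.ReflTransGen.tail hu h
      by_cases hcase : ∃ w ∈ X, A w y
      · obtain ⟨w, hwX, hAwy⟩ := hcase
        obtain ⟨p1, ⟨hp1ne, hp1h, hp1l, hp1nd, hp1c⟩, hp1mem⟩ :=
          exists_path_of_reflTransGen hwX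
        refine ⟨p1 ++ [y], y :: b :: c :: t2, ⟨by simp, ?_, ?_, ?_, ?_⟩,
          ⟨by simp, by simp, hql, hqnd, hqc⟩, ?_⟩
        · have h' : (p1 ++ [y]).head? = p1.head? := by
            rcases p1 with _ | ⟨a, p1⟩
            · exact absurd rfl hp1ne
            · simp
          rw [h']
          exact hp1h
        · exact List.getLast?_concat
        · rw [List.nodup_append']
          refine ⟨hp1nd, by simp, ?_⟩
          intro a ha hb'
          simp at hb'
          rw [hb'] at ha
          exact hyX (hp1mem y ha)
        · rw [List.Chain', List.isChain_append]
          refine ⟨hp1c.imp fun a b h => h.1, List.isChain_singleton _, ?_⟩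
          intro a ha d hd
          simp at hd
          rw [hp1l] at ha
          simp at ha
          rw [← ha, ← hd]
          exact hAwy
        · rintro ⟨u, v⟩ he heq
          have hch : (p1 ++ [y]).Chain' (fun u v => (u, v) ∉ pathArcs (y :: b :: c :: t2)) := by
            rw [List.Chain', List.isChain_append]
            refine ⟨hp1c.imp fun a b h => h.2.1, List.isChain_singleton _, ?_⟩
            intro a ha d hd
            simp at hd
            rw [hp1l] at ha
            simp at ha
            rw [← ha, ← hd]
            exact not_pathArcs_into_head hqnd (by simp)
          exact rel_of_pathArcs hch he heq
      · push_neg at hcase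
        have htX : ∀ w ∈ c :: t2, w ∉ X := by
          intro w hw hwX
          have hwy : w ≠ y := fun h => hynotin (h ▸ List.mem_cons_of_mem b hw)
          rcases hsc y w hwy.symm with h | h
          · exact hF1 w hw h
          · exact hcase w hwX h
        have hzX : z ∉ X := htX z hzt
        have hbcmem : (b, c) ∈ pathArcs (y :: b :: c :: t2) := by
          rw [pathArcs_cons_cons, pathArcs_cons_cons]
          simp
        have hkey : ∀ u v : V, u ∈ X → v ∉ X → A u v → u = b ∧ v = c := by
          intro u v huX hvX hAuv
          have hvy : v ≠ y := fun h => hcase u huX (h ▸ hAuv)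
          have hmemq : (u, v) ∈ pathArcs (y :: b :: c :: t2) := by
            by_contra hnm
            exact hvX (hstep huX ⟨hAuv, hnm, hvy⟩)
          have huq : u ∈ y :: b :: c :: t2 := (mem_of_pathArcs hmemq).1
          have hub : u = b := by
            have huq2 : u = y ∨ u = b ∨ u ∈ c :: t2 := by simpa using huq
            rcases huq2 with rfl | rfl | h
            · exact absurd huX hyX
            · rfl
            · exact absurd huX (htX u h)
          subst hub
          exact ⟨rfl, pathArcs_succ_unique hqnd hmemq hbcmem⟩
        have hbX : b ∈ X := by
          obtain ⟨p0, hp0ne, hp0h, hp0l, hp0nd, hp0c⟩ := h1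
          obtain ⟨u, v, hmem, huX, hvX, hAuv⟩ :=
            exists_exit X p0 x y hp0c hp0h hp0l hxX hyX
          obtain ⟨hub, -⟩ := hkey u v huX hvX hAuv
          exact hub ▸ huX
        have hAbc : A b c := rel_of_pathArcs hqc hbcmem
        rcases hC b c hAbc with ⟨p', hne', hh', hl', hnd', hc'⟩ | ⟨qh, hne2, hh2, hl2, hnd2, hc2⟩
        · obtain ⟨u, v, hmem, huX, hvX, hDuv⟩ :=
            exists_exit X p' x y hc' hh' hl' hxX hyX
          obtain ⟨rfl, rfl⟩ := hkey u v huX hvX hDuv.1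
          exact absurd rfl hDuv.2
        · have hXq : ∀ w ∈ qh, w ∉ X := by
            intro w hw hwX
            obtain ⟨s1, s2, heq⟩ := List.append_of_mem hw
            have hc2' : (s1 ++ w :: s2).Chain' (Del A (b, c)) := by rw [← heq]; exact hc2
            have hl2' : (s1 ++ w :: s2).getLast? = some z := by rw [← heq]; exact hl2
            have hcs : (w :: s2).Chain' (Del A (b, c)) :=
              (List.isChain_append.mp hc2').2.1
            have hls : (w :: s2).getLast? = some z := by
              rw [← List.getLast?_append_of_ne_nil s1 (by simp)]
              exact hl2'
            obtain ⟨u, v, hmem, huX, hvX, hDuv⟩ :=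
              exists_exit X (w :: s2) w z hcs (by simp) hls hwX hzX
            obtain ⟨rfl, rfl⟩ := hkey u v huX hvX hDuv.1
            exact hDuv.2 rfl
          obtain ⟨p1, ⟨hp1ne, hp1h, hp1l, hp1nd, hp1c⟩, hp1mem⟩ :=
            exists_path_of_reflTransGen hbX
          have hcX : c ∉ X := htX c (by simp)
          have hcy : c ≠ y := fun h => hynotin (by rw [← h]; simp)
          have hAcy : A c y := by
            rcases hsc y c hcy.symm with h | h
            · exact absurd h (hF1 c (by simp))
            · exact h
          have hPh : (p1 ++ [c, y]).head? = some x := by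
            have h' : (p1 ++ [c, y]).head? = p1.head? := by
              rcases p1 with _ | ⟨a, p1⟩
              · exact absurd rfl hp1ne
              · simp
            rw [h']
            exact hp1h
          have hPl : (p1 ++ [c, y]).getLast? = some y := by
            rw [List.getLast?_append_of_ne_nil _ (by simp)]
            simp
          have hPnd : (p1 ++ [c, y]).Nodup := by
            rw [List.nodup_append']
            refine ⟨hp1nd, by simp [hcy], ?_⟩
            intro a ha hb'
            simp at hb'
            rcases hb' with rfl | rfl
            · exact hcX (hp1mem a ha)
            · exact hyX (hp1mem a ha)
          have hPc : (p1 ++ [c, y]).Chain' A := by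
            rw [List.Chain', List.isChain_append]
            refine ⟨hp1c.imp fun a b h => h.1, List.isChain_pair.mpr hAcy, ?_⟩
            intro a ha d hd
            simp at hd
            rw [hp1l] at ha
            simp at ha
            rw [← ha, ← hd]
            exact hAbc
          refine ⟨p1 ++ [c, y], qh, ⟨by simp, hPh, hPl, hPnd, hPc⟩,
            ⟨hne2, hh2, hl2, hnd2, hc2.imp fun a b h => h.1⟩, ?_⟩
          rintro ⟨u, v⟩ he hq2
          have huqX : u ∉ X := hXq u (mem_of_pathArcs hq2).1
          have hu2 : u ∈ p1 ++ [c, y] := (mem_of_pathArcs he).1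
          rcases List.mem_append.mp hu2 with h | h
          · exact huqX (hp1mem u h)
          · simp at h
            rcases h with rfl | rfl
            · have hcyP : (u, y) ∈ pathArcs (p1 ++ [u, y]) :=
                mem_pathArcs_iff.mpr ⟨p1, [], by simp⟩
              have hv : v = y := pathArcs_succ_unique hPnd he hcyP
              rw [hv] at hq2
              exact not_pathArcs_into_head hnd2 hh2 hq2
            · exact not_pathArcs_from_last hPnd hPl he
end

section
/- Let D be a semicomplete digraph on at least 4 vertices with a cut-arc xy. Assume D − xy has exactly two strong components, In(D − xy) = {v} = {x}, the vertex y has out-degree 1 in D with unique out-neighbor z, and D − yz contains no directed path from u to z, where u ∈ Out(D − xy). Then D has no good (u,v)-pair. -/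
variable {V : Type*}

/-- Obstruction with a cut-arc `xy`: if `D - xy` has exactly two strong
components, `In(D - xy) = {v} = {x}`, `y` has unique out-neighbour `z` in `D`,
`u ∈ Out(D - xy)` and there is no `(u,z)`-path in `D - yz`, then `D` has no
good `(u,v)`-pair. -/
theorem stmt13 [Fintype V] (A : V → V → Prop) (hsc : Semicomplete A)
    (hirr : Irreflexive A) (h4 : 4 ≤ Fintype.card V) (hstrong : Strong A)
    (x y z u v : V) (hxy : A x y) (hcut : ¬ Strong (Del A (x, y)))
    (htwo : ∃ S T : Set V, (∀ a : V, a ∈ S ↔ a ∉ T) ∧ S.Nonempty ∧ T.Nonempty ∧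
      StrongOn (Del A (x, y)) S ∧ StrongOn (Del A (x, y)) T)
    (hin : InSet (Del A (x, y)) = {x}) (hvx : v = x)
    (hz : A y z) (hz1 : ∀ t : V, A y t → t = z)
    (hu : u ∈ OutSet (Del A (x, y)))
    (hnopath : ¬ Reach (Del A (y, z)) u z) :
    ¬ GoodPair A u v := by
  rintro ⟨Bp, Bm, ⟨hpA, -, -, hpreach⟩, ⟨hmA, -, hmuniq, -⟩, hdisj⟩
  have hynev : y ≠ v := by
    rw [hvx]; rintro rfl; exact hirr y hxy
  obtain ⟨w, hw, -⟩ := hmuniq y hynev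
  have hwz : w = z := hz1 w (hmA _ hw)
  rw [hwz] at hw
  have hyzBp : (y, z) ∉ Bp := fun h => Set.disjoint_left.mp hdisj h hw
  apply hnopath
  refine Relation.ReflTransGen.mono (p := Del A (y, z)) ?_ u z (hpreach z)
  intro a b hab
  exact ⟨hpA _ hab, fun he => hyzBp (he ▸ hab)⟩
end

section
/- Let D be a strong semicomplete digraph and u, v vertices of D. If there exists an arc e of D such that u is not in the initial strong component of D − e and v is not in the terminal strong component of D − e, then D has no out-branching rooted at u arc-disjoint from an in-branching rooted at v. -/
variable {V : Type*}

/-- In a strong semicomplete digraph, if some arc `e` satisfies that `u` is not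
in the initial strong component of `D - e` (= `Out(D - e)`) and `v` is not in
the terminal strong component of `D - e` (= `In(D - e)`), then there is no good
`(u,v)`-pair. -/
theorem stmt18 [Fintype V] (A : V → V → Prop) (hsc : Semicomplete A)
    (hirr : Irreflexive A) (hstrong : Strong A) (u v : V)
    (h : ∃ e : V × V, A e.1 e.2 ∧ u ∉ OutSet (Del A e) ∧ v ∉ InSet (Del A e)) :
    ¬ GoodPair A u v := by
  rintro ⟨Bp, Bm, ⟨hBpA, -, -, hBpreach⟩, ⟨hBmA, -, -, hBmreach⟩, hdisj⟩
  obtain ⟨e, heA, hu, hv⟩ := h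
  simp only [OutSet, Set.mem_setOf_eq, not_forall] at hu
  obtain ⟨y, hy⟩ := hu
  simp only [InSet, Set.mem_setOf_eq, not_forall] at hv
  obtain ⟨x, hx⟩ := hv
  have hep : e ∈ Bp := by
    by_contra he
    exact hy (Relation.ReflTransGen.mono
      (fun a b hab => ⟨hBpA _ hab, fun h' => he (h' ▸ hab)⟩) _ _ (hBpreach y))
  have hem : e ∈ Bm := by
    by_contra he
    exact hx (Relation.ReflTransGen.mono
      (fun a b hab => ⟨hBmA _ hab, fun h' => he (h' ▸ hab)⟩) _ _ (hBmreach x))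
  exact Set.disjoint_left.mp hdisj hep hem
end
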